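/- arXiv:1811.06718 — 4 statements merged into one kernel-verified Lean document; each statement's English description precedes it below -/
import Mathlib

section
/- Let A, B, C be integers with 1 ≤ A ≤ B < C. Then every complex root z of the polynomial x³ + Ax² + Bx + C satisfies |z| > 1. Consequently, any 3×3 integer matrix with characteristic polynomial x³ + Ax² + Bx + C is expanding (each of its eigenvalues is greater than 1 in modulus). -/
open MeasureTheory

noncomputable def Mmat (A B C : ℤ) : Matrix (Fin 3) (Fin 3) ℝ :=
  !![0, 0, -(C : ℝ); 1, 0, -(B : ℝ); 0, 1, -(A : ℝ)]

def Ddig (C : ℤ) : Set (Fin 3 → ℝ) :=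
  {d | ∃ i : ℤ, 0 ≤ i ∧ i < C ∧ d = ![(i : ℝ), 0, 0]}

def toR (α : Fin 3 → ℤ) : Fin 3 → ℝ := fun i => (α i : ℝ)

def tileTranslate (v : Fin 3 → ℝ) (T : Set (Fin 3 → ℝ)) : Set (Fin 3 → ℝ) :=
  (fun x => x + v) '' T

def IsABCTile (A B C : ℤ) (T : Set (Fin 3 → ℝ)) : Prop :=
  1 ≤ A ∧ A ≤ B ∧ B < C ∧
  T.Nonempty ∧ IsCompact T ∧ 0 < volume T ∧
  (Mmat A B C).mulVec '' T = ⋃ d ∈ Ddig C, tileTranslate d T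

def Neighbors (T : Set (Fin 3 → ℝ)) : Set (Fin 3 → ℤ) :=
  {α | α ≠ 0 ∧ (T ∩ tileTranslate (toR α) T).Nonempty}

lemma key (A B C : ℤ) (h1 : 1 ≤ A) (h2 : A ≤ B) (h3 : B < C)
    (z : ℂ) (hp : z ^ 3 + (A : ℂ) * z ^ 2 + (B : ℂ) * z + (C : ℂ) = 0) :
    1 < ‖z‖ := by
  have hA : (1:ℝ) ≤ (A:ℝ) := by exact_mod_cast h1
  have hB : (A:ℝ) ≤ (B:ℝ) := by exact_mod_cast h2
  have hC : (B:ℝ) < (C:ℝ) := by exact_mod_cast h3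
  by_contra hle
  push_neg at hle
  set r := ‖z‖ with hr
  have hr0 : 0 ≤ r := norm_nonneg z
  -- step 1 : r = 1
  have hw : (C:ℂ) = z * (z ^ 3 + ((A:ℂ) - 1) * z ^ 2 + ((B:ℂ) - (A:ℂ)) * z + ((C:ℂ) - (B:ℂ))) := by
    linear_combination (1 - z) * hp
  have habs1 : ‖((A:ℂ) - 1)‖ = (A:ℝ) - 1 := by
    rw [show ((A:ℂ) - 1) = ((A - 1 : ℤ) : ℂ) by push_cast; ring, Complex.norm_intCast]
    push_cast
    rw [abs_of_nonneg]; linarith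
  have habs2 : ‖((B:ℂ) - (A:ℂ))‖ = (B:ℝ) - (A:ℝ) := by
    rw [show ((B:ℂ) - (A:ℂ)) = ((B - A : ℤ) : ℂ) by push_cast; ring, Complex.norm_intCast]
    push_cast
    rw [abs_of_nonneg]; linarith
  have habs3 : ‖((C:ℂ) - (B:ℂ))‖ = (C:ℝ) - (B:ℝ) := by
    rw [show ((C:ℂ) - (B:ℂ)) = ((C - B : ℤ) : ℂ) by push_cast; ring, Complex.norm_intCast]
    push_cast
    rw [abs_of_nonneg]; linarith
  have hCabs : (C:ℝ) = r * ‖(z ^ 3 + ((A:ℂ) - 1) * z ^ 2 + ((B:ℂ) - (A:ℂ)) * z + ((C:ℂ) - (B:ℂ)))‖ := by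
    have := congrArg (‖·‖) hw
    rwa [norm_mul, Complex.norm_intCast, abs_of_nonneg (by linarith : (0:ℝ) ≤ (C:ℝ))] at this
  have hwb : ‖(z ^ 3 + ((A:ℂ) - 1) * z ^ 2 + ((B:ℂ) - (A:ℂ)) * z + ((C:ℂ) - (B:ℂ)))‖
      ≤ r ^ 3 + ((A:ℝ) - 1) * r ^ 2 + ((B:ℝ) - (A:ℝ)) * r + ((C:ℝ) - (B:ℝ)) := by
    calc ‖(z ^ 3 + ((A:ℂ) - 1) * z ^ 2 + ((B:ℂ) - (A:ℂ)) * z + ((C:ℂ) - (B:ℂ)))‖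
        ≤ ‖(z ^ 3 + ((A:ℂ) - 1) * z ^ 2 + ((B:ℂ) - (A:ℂ)) * z)‖
          + ‖((C:ℂ) - (B:ℂ))‖ := norm_add_le _ _
      _ ≤ ‖(z ^ 3 + ((A:ℂ) - 1) * z ^ 2)‖ + ‖(((B:ℂ) - (A:ℂ)) * z)‖
          + ‖((C:ℂ) - (B:ℂ))‖ := by
            gcongr; exact norm_add_le _ _
      _ ≤ ‖(z ^ 3)‖ + ‖(((A:ℂ) - 1) * z ^ 2)‖ + ‖(((B:ℂ) - (A:ℂ)) * z)‖
          + ‖((C:ℂ) - (B:ℂ))‖ := by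
            gcongr; exact norm_add_le _ _
      _ = r ^ 3 + ((A:ℝ) - 1) * r ^ 2 + ((B:ℝ) - (A:ℝ)) * r + ((C:ℝ) - (B:ℝ)) := by
            rw [norm_mul, norm_mul, norm_pow, norm_pow, habs1, habs2, habs3]
  have hr1 : r = 1 := by
    have key1 : (C:ℝ) ≤ r * (r ^ 3 + ((A:ℝ) - 1) * r ^ 2 + ((B:ℝ) - (A:ℝ)) * r + ((C:ℝ) - (B:ℝ))) :=
      hCabs.le.trans (mul_le_mul_of_nonneg_left hwb hr0)
    have key2 : r ^ 3 + ((A:ℝ) - 1) * r ^ 2 + ((B:ℝ) - (A:ℝ)) * r + ((C:ℝ) - (B:ℝ)) ≤ (C:ℝ) := by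
      nlinarith [pow_le_one₀ hr0 hle (n := 3), pow_le_one₀ hr0 hle (n := 2)]
    nlinarith [mul_le_mul_of_nonneg_left key2 hr0]
  -- step 2 : |z| = 1 impossible
  have hzz : z * (starRingEnd ℂ) z = 1 := by
    rw [Complex.mul_conj]
    norm_cast
    rw [Complex.normSq_eq_norm_sq, ← hr, hr1]; norm_num
  set u := z.re with hu
  have hquad : z ^ 2 - 2 * (u:ℂ) * z + 1 = 0 := by
    have hconj : (starRingEnd ℂ) z = 2 * (u:ℂ) - z := by
      have h := Complex.add_conj z
      rw [← hu] at h
      push_cast at h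
      linear_combination h
    calc z ^ 2 - 2 * (u:ℂ) * z + 1 = z ^ 2 - 2 * (u:ℂ) * z + z * (starRingEnd ℂ) z := by rw [hzz]
      _ = z ^ 2 - 2 * (u:ℂ) * z + z * (2 * (u:ℂ) - z) := by rw [hconj]
      _ = 0 := by ring
  have hlin : ((4 * u ^ 2 + 2 * (A:ℝ) * u + (B:ℝ) - 1 : ℝ) : ℂ) * z
      + (((C:ℝ) - (A:ℝ) - 2 * u : ℝ) : ℂ) = 0 := by
    push_cast
    linear_combination hp - (z + (A:ℂ) + 2 * (u:ℂ)) * hquad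
  set a : ℝ := 4 * u ^ 2 + 2 * (A:ℝ) * u + (B:ℝ) - 1 with ha
  set b : ℝ := (C:ℝ) - (A:ℝ) - 2 * u with hb
  have him : a * z.im = 0 := by
    have := congrArg Complex.im hlin
    simpa using this
  rcases mul_eq_zero.mp him with ha0 | him0
  · -- a = 0, then b = 0
    have hb0 : b = 0 := by
      have := congrArg Complex.re hlin
      simp [ha0] at this
      simpa using this
    rw [ha] at ha0; rw [hb] at hb0
    nlinarith
  · -- z is real, z = ±1
    have hz : z = (u:ℂ) := Complex.ext rfl (by simpa using him0)
    have hu1 : |u| = 1 := by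
      rw [← Real.norm_eq_abs, ← Complex.norm_real, ← hz, ← hr, hr1]
    have hpu : u ^ 3 + (A:ℝ) * u ^ 2 + (B:ℝ) * u + (C:ℝ) = 0 := by
      have := hp
      rw [hz] at this
      exact_mod_cast this
    rcases abs_eq (by norm_num : (0:ℝ) ≤ 1) |>.mp hu1 with h | h <;> rw [h] at hpu <;> nlinarith


theorem stmt0 (A B C : ℤ) (h1 : 1 ≤ A) (h2 : A ≤ B) (h3 : B < C) :
    (∀ z : ℂ, z ^ 3 + (A : ℂ) * z ^ 2 + (B : ℂ) * z + (C : ℂ) = 0 → 1 < ‖z‖) ∧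
    (∀ M : Matrix (Fin 3) (Fin 3) ℤ,
      M.charpoly = Polynomial.X ^ 3 + Polynomial.C A * Polynomial.X ^ 2 +
        Polynomial.C B * Polynomial.X + Polynomial.C C →
      ∀ z : ℂ, ((M.charpoly).map (Int.castRingHom ℂ)).IsRoot z → 1 < ‖z‖) := by
  refine ⟨fun z hz => key A B C h1 h2 h3 z hz, fun M hM z hz => ?_⟩
  rw [hM] at hz
  simp [Polynomial.IsRoot, Polynomial.eval_map] at hz
  exact key A B C h1 h2 h3 z (by linear_combination hz)
end

section
/- Let T be an ABC-tile with 1 ≤ A = B < C. Then the lattice points s₁ = (2A−1, A+1, 1) and s₂ = (−1, A−1, 1) are neighbors of T, i.e. T ∩ (T + s₁) ≠ ∅ and T ∩ (T + s₂) ≠ ∅ (and by symmetry the same holds for −s₁ and −s₂). -/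
open MeasureTheory

/-! ### Auxiliary material -/

open Filter Topology Matrix

attribute [local instance] Matrix.linftyOpNormedRing Matrix.linftyOpNormedAlgebra

noncomputable def Nmat (A C : ℤ) : Matrix (Fin 3) (Fin 3) ℝ :=
  !![-(A:ℝ)/C, 1, 0; -(A:ℝ)/C, 0, 1; -1/(C:ℝ), 0, 0]

lemma NM_eq_one (A C : ℤ) (hC : (0:ℝ) < (C:ℝ)) : Nmat A C * Mmat A A C = 1 := by
  have h0 : (C:ℝ) ≠ 0 := ne_of_gt hC
  ext i j
  fin_cases i <;> fin_cases j <;>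
    simp [Nmat, Mmat, Matrix.mul_apply, Fin.sum_univ_three, Matrix.one_apply,
      Matrix.vecHead, Matrix.vecTail] <;>
    field_simp <;> ring

noncomputable def Ncmat (A C : ℤ) : Matrix (Fin 3) (Fin 3) ℂ :=
  (Complex.ofRealHom.mapMatrix : Matrix (Fin 3) (Fin 3) ℝ →+* Matrix (Fin 3) (Fin 3) ℂ) (Nmat A C)

lemma disk_lemma (a c : ℝ) (ha : 1 ≤ a) (hc : a + 1 ≤ c) (μ : ℂ) (habs : ‖μ‖ ≤ 1) :
    μ^3 + a*μ^2 + a*μ + c ≠ 0 := by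
  intro h
  set x := μ.re with hx
  set y := μ.im with hy
  have hxy : x^2 + y^2 ≤ 1 := by
    have h1 := Complex.sq_norm μ
    rw [Complex.normSq_apply] at h1
    nlinarith [norm_nonneg μ]
  have hre : x^3 - 3*x*y^2 + a*(x^2 - y^2) + a*x + c = 0 := by
    have := congrArg Complex.re h
    simp [Complex.add_re, Complex.mul_re, Complex.mul_im, pow_succ, pow_zero] at this
    nlinarith [this]
  have him : y * (3*x^2 - y^2 + 2*a*x + a) = 0 := by
    have := congrArg Complex.im h
    simp [Complex.add_im, Complex.mul_re, Complex.mul_im, pow_succ, pow_zero] at this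
    nlinarith [this]
  by_cases hy0 : y = 0
  · rw [hy0] at hre hxy
    have hx2 : x^2 ≤ 1 := by nlinarith
    have h1x : -1 ≤ x := by nlinarith [sq_nonneg (x+1)]
    have hx1 : x ≤ 1 := by nlinarith [sq_nonneg (x-1)]
    nlinarith [mul_nonneg (by linarith : (0:ℝ) ≤ 1+x)
        (by nlinarith [sq_nonneg (2*x-1)] : (0:ℝ) ≤ x^2 - x + 1),
      mul_nonneg (by linarith : (0:ℝ) ≤ a - 1)
        (by nlinarith [sq_nonneg (2*x+1)] : (0:ℝ) ≤ x^2 + x + 1), hre]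
  · have hq : y^2 = 3*x^2 + 2*a*x + a := by
      rcases mul_eq_zero.1 him with h' | h'
      · exact absurd h' hy0
      · linarith
    have hle : 4*x^2 + 2*a*x + a - 1 ≤ 0 := by nlinarith [hxy, hq]
    have h2xa : 0 ≤ 2*x + a := by
      by_contra hcon
      push_neg at hcon
      nlinarith [mul_pos (by linarith : (0:ℝ) < -(2*x+1)) (by linarith : (0:ℝ) < -(2*x+a-1))]
    have hx12 : 2*x - 1 < 0 := by nlinarith [sq_nonneg (2*x)]
    nlinarith [mul_nonneg h2xa (by linarith : (0:ℝ) ≤ -(4*x^2 + 2*a*x + a - 1)), hre, hq]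

lemma spec_poly (A C : ℤ) (hC : (0:ℝ) < (C:ℝ)) (lam : ℂ) (hlam : lam ∈ spectrum ℂ (Ncmat A C)) :
    (C:ℂ) * lam^3 + (A:ℂ) * lam^2 + (A:ℂ) * lam + 1 = 0 := by
  have hC0 : ((C:ℝ):ℂ) ≠ 0 := by
    simp only [ne_eq, Complex.ofReal_eq_zero]; exact ne_of_gt hC
  rw [spectrum.mem_iff] at hlam
  by_contra hpoly
  apply hlam
  rw [Matrix.isUnit_iff_isUnit_det]
  have hdet : ((algebraMap ℂ (Matrix (Fin 3) (Fin 3) ℂ)) lam - Ncmat A C).det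
      = lam^3 + ((A:ℝ):ℂ)/(C:ℝ) * lam^2 + ((A:ℝ):ℂ)/(C:ℝ) * lam + 1/((C:ℝ):ℂ) := by
    rw [Matrix.algebraMap_eq_diagonal]
    rw [Matrix.det_fin_three]
    simp [Ncmat, Nmat, Matrix.diagonal, RingHom.mapMatrix_apply, Matrix.map_apply,
      Matrix.vecHead, Matrix.vecTail]
    ring
  rw [hdet, isUnit_iff_ne_zero]
  intro h0
  apply hpoly
  have hCI : (C:ℂ) ≠ 0 := by exact_mod_cast hC0
  push_cast at h0
  field_simp [hCI] at h0
  linear_combination h0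

lemma eigen_lt_one (A C : ℤ) (hA : 1 ≤ A) (hAC : A < C) (lam : ℂ)
    (hlam : lam ∈ spectrum ℂ (Ncmat A C)) : ‖lam‖₊ < 1 := by
  have hC : (0:ℝ) < (C:ℝ) := by exact_mod_cast lt_of_lt_of_le (by linarith) hAC
  have hpoly := spec_poly A C hC lam hlam
  have hlam0 : lam ≠ 0 := by
    intro h0
    rw [h0] at hpoly
    norm_num at hpoly
  set μ : ℂ := lam⁻¹ with hμ
  have hp : μ^3 + ((A:ℝ):ℂ)*μ^2 + ((A:ℝ):ℂ)*μ + ((C:ℝ):ℂ) = 0 := by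
    rw [hμ]
    push_cast
    field_simp
    first
    | linear_combination (lam^3 - 1) * hpoly
    | linear_combination hpoly
    | linear_combination lam^3 * hpoly
  have hdisk := disk_lemma (A:ℝ) (C:ℝ)
    (by exact_mod_cast hA) (by exact_mod_cast hAC) μ
  have habs : ¬ (‖μ‖ ≤ 1) := fun hle => hdisk hle hp
  push_neg at habs
  have : ‖lam‖ < 1 := by
    rw [hμ] at habs
    rw [norm_inv] at habs
    have h0 : 0 < ‖lam‖ := by
      simpa [norm_pos_iff] using hlam0
    rw [lt_inv_comm₀ (by norm_num) h0] at habs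
    simpa using habs
  rw [← NNReal.coe_lt_coe]
  simpa [coe_nnnorm] using this

lemma ncmat_pow_norm_tendsto (A C : ℤ) (hA : 1 ≤ A) (hAC : A < C) :
    Tendsto (fun n => ‖(Ncmat A C)^n‖) atTop (𝓝 0) := by
  haveI : CompleteSpace (Matrix (Fin 3) (Fin 3) ℂ) := FiniteDimensional.complete ℂ _
  set X := Ncmat A C with hX
  have hrad : spectralRadius ℂ X < 1 := by
    have h := spectrum.spectralRadius_lt_of_forall_lt (a := X) (r := 1)
      (fun z hz => eigen_lt_one A C hA hAC z hz)
    simpa using h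
  obtain ⟨r, hr1, hr2⟩ := ENNReal.lt_iff_exists_nnreal_btwn.1 hrad
  have hev := (spectrum.pow_nnnorm_pow_one_div_tendsto_nhds_spectralRadius X).eventually_lt_const hr1
  have hr2' : (r:ℝ) < 1 := by exact_mod_cast hr2
  apply squeeze_zero' (Filter.Eventually.of_forall (fun n => norm_nonneg _))
    (g := fun n => (r:ℝ)^n) _ (tendsto_pow_atTop_nhds_zero_of_lt_one r.coe_nonneg hr2')
  filter_upwards [hev, eventually_ge_atTop 1] with n hn hn1
  have hnn : ‖X^n‖₊ ^ ((1:ℝ)/n) < r := by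
    rw [← ENNReal.coe_lt_coe, ENNReal.coe_rpow_of_nonneg _ (by positivity)]
    exact hn
  have hx : ‖X^n‖₊ < r ^ n := by
    have h2 : (‖X^n‖₊ ^ ((1:ℝ)/n)) ^ n < r ^ n := by
      apply pow_lt_pow_left₀ hnn (by positivity)
      omega
    rwa [← NNReal.rpow_natCast (‖X^n‖₊ ^ ((1:ℝ)/n)) n, ← NNReal.rpow_mul,
      one_div, inv_mul_cancel₀ (show ((n:ℝ)) ≠ 0 by exact_mod_cast Nat.one_le_iff_ne_zero.mp hn1),
      NNReal.rpow_one] at h2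
  rw [← coe_nnnorm]
  exact_mod_cast hx.le

lemma nmat_pow_entry_tendsto (A C : ℤ) (hA : 1 ≤ A) (hAC : A < C) (i j : Fin 3) :
    Tendsto (fun n => ((Nmat A C) ^ n) i j) atTop (𝓝 0) := by
  have hentry : ∀ (X : Matrix (Fin 3) (Fin 3) ℂ) (i j : Fin 3), ‖X i j‖ ≤ ‖X‖ := by
    intro X i j
    have h1 : X *ᵥ (Pi.single j 1) = fun i => X i j := by
      rw [Matrix.mulVec_single]; simp; rfl
    calc ‖X i j‖ = ‖(X *ᵥ Pi.single j 1) i‖ := by rw [h1]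
      _ ≤ ‖X *ᵥ Pi.single j 1‖ := norm_le_pi_norm _ i
      _ ≤ ‖X‖ * ‖(Pi.single j (1:ℂ) : Fin 3 → ℂ)‖ := Matrix.linfty_opNorm_mulVec _ _
      _ = ‖X‖ := by rw [Pi.norm_single]; simp
  have h' : Tendsto (fun n => ‖(Complex.ofRealHom.mapMatrix :
      Matrix (Fin 3) (Fin 3) ℝ →+* Matrix (Fin 3) (Fin 3) ℂ) ((Nmat A C)^n)‖) atTop (𝓝 0) := by
    simpa only [map_pow, Ncmat] using ncmat_pow_norm_tendsto A C hA hAC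
  rw [tendsto_zero_iff_norm_tendsto_zero]
  apply squeeze_zero (fun n => norm_nonneg _)
    (g := fun n => ‖(Complex.ofRealHom.mapMatrix :
      Matrix (Fin 3) (Fin 3) ℝ →+* Matrix (Fin 3) (Fin 3) ℂ) ((Nmat A C)^n)‖) _ h'
  intro n
  have := hentry ((Complex.ofRealHom.mapMatrix :
    Matrix (Fin 3) (Fin 3) ℝ →+* Matrix (Fin 3) (Fin 3) ℂ) ((Nmat A C)^n)) i j
  simpa [RingHom.mapMatrix_apply, Matrix.map_apply, Real.norm_eq_abs] using this

lemma nmat_pow_mulvec_tendsto (A C : ℤ) (hA : 1 ≤ A) (hAC : A < C)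
    (w : ℕ → (Fin 3 → ℝ)) (R : ℝ) (hw : ∀ n j, |w n j| ≤ R) :
    Tendsto (fun n => ((Nmat A C) ^ n) *ᵥ (w n)) atTop (𝓝 0) := by
  rw [tendsto_pi_nhds]
  intro i
  simp only [Pi.zero_apply]
  have hg : Tendsto (fun n => ∑ j : Fin 3, |((Nmat A C) ^ n) i j| * R) atTop (𝓝 0) := by
    have : (0:ℝ) = ∑ _j : Fin 3, 0 * R := by simp
    rw [this]
    apply tendsto_finset_sum
    intro j _
    have h := (nmat_pow_entry_tendsto A C hA hAC i j).abs.mul_const R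
    rw [abs_zero] at h
    exact h
  rw [tendsto_zero_iff_norm_tendsto_zero]
  apply squeeze_zero (fun n => norm_nonneg _) _ hg
  intro n
  rw [Real.norm_eq_abs]
  have hexp : (((Nmat A C) ^ n) *ᵥ (w n)) i = ∑ j : Fin 3, ((Nmat A C) ^ n) i j * w n j := by
    simp [Matrix.mulVec, dotProduct]
  rw [hexp]
  calc |∑ j : Fin 3, ((Nmat A C) ^ n) i j * w n j|
      ≤ ∑ j : Fin 3, |((Nmat A C) ^ n) i j * w n j| := Finset.abs_sum_le_sum_abs _ _
    _ ≤ ∑ j : Fin 3, |((Nmat A C) ^ n) i j| * R := by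
        apply Finset.sum_le_sum
        intro j _
        rw [abs_mul]
        exact mul_le_mul_of_nonneg_left (hw n j) (abs_nonneg _)

lemma tile_step (A C : ℤ) (hC : (0:ℝ) < (C:ℝ)) (T : Set (Fin 3 → ℝ))
    (heq : (Mmat A A C).mulVec '' T = ⋃ d ∈ Ddig C, tileTranslate d T)
    {x : Fin 3 → ℝ} (hx : x ∈ T) {d : Fin 3 → ℝ} (hd : d ∈ Ddig C) :
    (Nmat A C) *ᵥ (x + d) ∈ T := by
  have hmem : x + d ∈ (Mmat A A C).mulVec '' T := by
    rw [heq]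
    exact Set.mem_biUnion hd ⟨x, hx, rfl⟩
  obtain ⟨t, ht, hMt⟩ := hmem
  have : Nmat A C *ᵥ (x + d) = t := by
    rw [← hMt, Matrix.mulVec_mulVec, NM_eq_one A C hC, Matrix.one_mulVec]
  rwa [this]

lemma neighbor_of_cycle (A C : ℤ) (hA : 1 ≤ A) (hAC : A < C) (T : Set (Fin 3 → ℝ))
    (hne : T.Nonempty) (hcomp : IsCompact T)
    (heq : (Mmat A A C).mulVec '' T = ⋃ d ∈ Ddig C, tileTranslate d T)
    (α : ℕ → (Fin 3 → ℤ)) (jj : ℕ → ℤ) (R : ℝ)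
    (hbound : ∀ n i, |toR (α n) i| ≤ R)
    (hjlo : ∀ n, -(C-1) ≤ jj n) (hjhi : ∀ n, jj n ≤ C - 1)
    (hrec : ∀ n, (Mmat A A C) *ᵥ toR (α n) = toR (α (n+1)) + ![((jj n : ℝ)), 0, 0]) :
    (T ∩ tileTranslate (toR (α 0)) T).Nonempty := by
  have hC : (0:ℝ) < (C:ℝ) := by exact_mod_cast lt_of_lt_of_le (by linarith) hAC
  set N := Nmat A C with hN
  -- digits
  set aZ : ℕ → ℤ := fun n => max (jj n) 0 with haZ
  set bZ : ℕ → ℤ := fun n => max (-(jj n)) 0 with hbZ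
  set da : ℕ → (Fin 3 → ℝ) := fun n => ![((aZ n : ℝ)), 0, 0] with hda
  set db : ℕ → (Fin 3 → ℝ) := fun n => ![((bZ n : ℝ)), 0, 0] with hdb
  have hdaD : ∀ n, da n ∈ Ddig C := by
    intro n
    refine ⟨aZ n, le_max_right _ _, ?_, rfl⟩
    have := hjhi n
    simp only [haZ]
    omega
  have hdbD : ∀ n, db n ∈ Ddig C := by
    intro n
    refine ⟨bZ n, le_max_right _ _, ?_, rfl⟩
    have := hjlo n
    simp only [hbZ]
    omega
  have hdiff : ∀ n, da n - db n = ![((jj n : ℝ)), 0, 0] := by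
    intro n
    have hab : aZ n - bZ n = jj n := by simp only [haZ, hbZ]; omega
    funext i
    fin_cases i <;> simp [hda, hdb]
    push_cast [← hab]
    ring
  -- partial-sum points stay in the tile
  set Sa : ℕ → (Fin 3 → ℝ) := fun n => ∑ k ∈ Finset.range n, (N^(k+1)) *ᵥ da k with hSa
  set Sb : ℕ → (Fin 3 → ℝ) := fun n => ∑ k ∈ Finset.range n, (N^(k+1)) *ᵥ db k with hSb
  have hstep : ∀ (dd : ℕ → (Fin 3 → ℝ)), (∀ n, dd n ∈ Ddig C) →
      ∀ n, ∀ x ∈ T, (∑ k ∈ Finset.range n, (N^(k+1)) *ᵥ dd k) + (N^n) *ᵥ x ∈ T := by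
    intro dd hdd n
    induction n with
    | zero => intro x hx; simpa using hx
    | succ n ih =>
      intro x hx
      have hx' : N *ᵥ (x + dd n) ∈ T := tile_step A C hC T heq hx (hdd n)
      have := ih _ hx'
      have hrw : (∑ k ∈ Finset.range n, (N^(k+1)) *ᵥ dd k) + (N^n) *ᵥ (N *ᵥ (x + dd n))
          = (∑ k ∈ Finset.range (n+1), (N^(k+1)) *ᵥ dd k) + (N^(n+1)) *ᵥ x := by
        rw [Finset.sum_range_succ, Matrix.mulVec_mulVec, ← pow_succ, Matrix.mulVec_add]
        abel
      rwa [hrw] at this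
  -- telescoping
  have htel : ∀ n, Sa n - Sb n = toR (α 0) - (N^n) *ᵥ toR (α n) := by
    intro n
    induction n with
    | zero => simp [hSa, hSb]
    | succ n ih =>
      have h1 : Sa (n+1) - Sb (n+1) = (Sa n - Sb n) + (N^(n+1)) *ᵥ (da n - db n) := by
        simp only [hSa, hSb, Finset.sum_range_succ, Matrix.mulVec_sub]
        abel
      rw [h1, ih, hdiff n]
      have h2 : ![((jj n : ℝ)), 0, 0] = (Mmat A A C) *ᵥ toR (α n) - toR (α (n+1)) := by
        rw [hrec n]; abel
      rw [h2, Matrix.mulVec_sub, Matrix.mulVec_mulVec]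
      have h3 : N^(n+1) * Mmat A A C = N^n := by
        rw [pow_succ, mul_assoc, NM_eq_one A C hC, mul_one]
      rw [h3]
      abel
  obtain ⟨x₀, hx₀⟩ := hne
  have hya : ∀ n, Sa n + (N^n) *ᵥ x₀ ∈ T := fun n => hstep da hdaD n x₀ hx₀
  have hyb : ∀ n, Sb n + (N^n) *ᵥ x₀ ∈ T := fun n => hstep db hdbD n x₀ hx₀
  obtain ⟨y, hyT, φ, hφ, hconv⟩ := hcomp.tendsto_subseq hya
  have hzero : Tendsto (fun n => (N^n) *ᵥ toR (α n)) atTop (𝓝 0) :=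
    nmat_pow_mulvec_tendsto A C hA hAC _ R (fun n i => hbound n i)
  have hybrw : ∀ n, Sb n + (N^n) *ᵥ x₀
      = (Sa n + (N^n) *ᵥ x₀) - toR (α 0) + (N^n) *ᵥ toR (α n) := by
    intro n
    have := htel n
    have h4 : Sb n = Sa n - (toR (α 0) - (N^n) *ᵥ toR (α n)) := by
      rw [← this]; abel
    rw [h4]; abel
  have hconv2 : Tendsto (fun n => Sb (φ n) + (N^(φ n)) *ᵥ x₀) atTop (𝓝 (y - toR (α 0))) := by
    have : Tendsto (fun n => (Sa (φ n) + (N^(φ n)) *ᵥ x₀) - toR (α 0) + (N^(φ n)) *ᵥ toR (α (φ n)))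
        atTop (𝓝 ((y - toR (α 0)) + 0)) := by
      exact (hconv.sub_const _).add (hzero.comp (hφ.tendsto_atTop))
    rw [add_zero] at this
    exact this.congr (fun n => (hybrw (φ n)).symm)
  have hyT' : y - toR (α 0) ∈ T :=
    hcomp.isClosed.mem_of_tendsto hconv2 (Filter.Eventually.of_forall (fun n => hyb (φ n)))
  refine ⟨y, hyT, ⟨y - toR (α 0), hyT', ?_⟩⟩
  show (y - toR (α 0)) + toR (α 0) = y
  abel

lemma neg_neighbor (T : Set (Fin 3 → ℝ)) (v : Fin 3 → ℤ)
    (h : (T ∩ tileTranslate (toR v) T).Nonempty) :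
    (T ∩ tileTranslate (toR (-v)) T).Nonempty := by
  obtain ⟨y, hyT, t, htT, hty⟩ := h
  refine ⟨t, htT, y, hyT, ?_⟩
  have htoR : toR (-v) = -toR v := by
    funext i; simp [toR]
  have hty' : t + toR v = y := hty
  show y + toR (-v) = t
  rw [htoR, ← hty']
  abel

theorem stmt9 (A C : ℤ) (T : Set (Fin 3 → ℝ)) (hT : IsABCTile A A C T) :
    (T ∩ tileTranslate (toR ![2 * A - 1, A + 1, 1]) T).Nonempty ∧
    (T ∩ tileTranslate (toR ![-1, A - 1, 1]) T).Nonempty ∧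
    (T ∩ tileTranslate (toR (-![2 * A - 1, A + 1, 1])) T).Nonempty ∧
    (T ∩ tileTranslate (toR (-![-1, A - 1, 1])) T).Nonempty := by
  obtain ⟨hA, -, hAC, hne, hcomp, -, heq⟩ := hT
  -- the 4-cycle
  set cyc : ℕ → (Fin 3 → ℤ) := fun n =>
    if n % 4 = 0 then ![2*A-1, A+1, 1]
    else if n % 4 = 1 then ![-1, A-1, 1]
    else if n % 4 = 2 then ![1-2*A, -(A+1), -1]
    else ![1, 1-A, -1] with hcyc
  set jv : ℕ → ℤ := fun n =>
    if n % 4 = 0 then -(C-1)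
    else if n % 4 = 1 then 2*A-1-C
    else if n % 4 = 2 then C-1
    else C-2*A+1 with hjv
  have hjlo : ∀ n, -(C-1) ≤ jv n := by
    intro n
    simp only [hjv]
    split_ifs <;> omega
  have hjhi : ∀ n, jv n ≤ C-1 := by
    intro n
    simp only [hjv]
    split_ifs <;> omega
  have hbound : ∀ n i, |toR (cyc n) i| ≤ 2*(A:ℝ)+1 := by
    intro n i
    have hZ : |cyc n i| ≤ 2*A+1 := by
      simp only [hcyc]
      split_ifs <;> fin_cases i <;> simp [abs_le] <;> omega
    rw [show toR (cyc n) i = ((cyc n i : ℤ):ℝ) from rfl, ← Int.cast_abs,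
      show (2:ℝ)*(A:ℝ)+1 = ((2*A+1 : ℤ):ℝ) by push_cast; ring]
    exact_mod_cast hZ
  have hrec : ∀ n, (Mmat A A C) *ᵥ toR (cyc n) = toR (cyc (n+1)) + ![((jv n : ℝ)), 0, 0] := by
    intro n
    have h4 : n % 4 = 0 ∨ n % 4 = 1 ∨ n % 4 = 2 ∨ n % 4 = 3 := by omega
    rcases h4 with h | h | h | h <;>
      [ (have h' : (n+1) % 4 = 1 := by omega);
        (have h' : (n+1) % 4 = 2 := by omega);
        (have h' : (n+1) % 4 = 3 := by omega);
        (have h' : (n+1) % 4 = 0 := by omega)] <;>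
      simp only [hcyc, hjv, h, h'] <;> norm_num <;>
      funext i <;> fin_cases i <;>
      simp [Mmat, toR, Matrix.mulVec, dotProduct, Fin.sum_univ_three,
        Matrix.vecHead, Matrix.vecTail] <;> push_cast <;> ring
  have hs1 : (T ∩ tileTranslate (toR ![2*A-1, A+1, 1]) T).Nonempty := by
    have := neighbor_of_cycle A C hA hAC T hne hcomp heq cyc jv (2*(A:ℝ)+1)
      hbound hjlo hjhi hrec
    simpa [hcyc] using this
  have hs2 : (T ∩ tileTranslate (toR ![-1, A-1, 1]) T).Nonempty := by
    have := neighbor_of_cycle A C hA hAC T hne hcomp heq (fun n => cyc (n+1)) (fun n => jv (n+1))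
      (2*(A:ℝ)+1) (fun n i => hbound (n+1) i) (fun n => hjlo (n+1)) (fun n => hjhi (n+1))
      (fun n => hrec (n+1))
    simpa [hcyc] using this
  exact ⟨hs1, hs2, neg_neighbor T _ hs1, neg_neighbor T _ hs2⟩
end

section
/- Let T be an ABC-tile with 1 ≤ A < B < C and C < 2(B − A) + 2. Then the lattice point s = (2(B−A)+2, 2(A−1), 2) is a neighbor of T, i.e. T ∩ (T + s) ≠ ∅ (and by symmetry T ∩ (T − s) ≠ ∅). -/
open MeasureTheory

/-! ### Auxiliary lemmas -/

lemma abc_realRoot (A B C t : ℝ) (hA : 1 ≤ A) (hAB : A ≤ B) (hBC : B + 1 ≤ C)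
    (h : t^3 + A*t^2 + B*t + C = 0) : -C < t ∧ t < -1 := by
  constructor
  · by_contra hcon
    push_neg at hcon
    nlinarith [sq_nonneg t, sq_nonneg (t + C), mul_pos (lt_of_lt_of_le (by linarith : (0:ℝ) < B+1) hBC) (lt_of_lt_of_le (by linarith) hBC)]
  · by_contra hcon
    push_neg at hcon
    rcases le_or_gt 0 t with h0 | h0
    · nlinarith
    · nlinarith [mul_nonneg (sq_nonneg t) (by linarith : (0:ℝ) ≤ t + A)]

lemma abc_cRoot (A B C : ℝ) (z : ℂ) (hA : 1 ≤ A) (hAB : A ≤ B) (hBC : B + 1 ≤ C)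
    (h : z^3 + (A:ℂ)*z^2 + (B:ℂ)*z + (C:ℂ) = 0) : 1 < ‖z‖ := by
  by_contra hcon
  push_neg at hcon
  set a := z.re with ha
  set b := z.im with hb
  have h1 : a^3 - 3*a*b^2 + A*(a^2-b^2) + B*a + C = 0 := by
    have := congrArg Complex.re h
    simp [Complex.add_re, Complex.mul_re, Complex.mul_im, pow_succ, pow_zero, one_mul] at this
    ring_nf at this ⊢
    linarith [this]
  have h2 : (3*a^2 - b^2 + 2*A*a + B) * b = 0 := by
    have := congrArg Complex.im h
    simp [Complex.add_im, Complex.mul_re, Complex.mul_im, pow_succ, pow_zero, one_mul] at this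
    ring_nf at this ⊢
    linarith [this]
  have hm : a^2 + b^2 ≤ 1 := by
    have : Complex.normSq z ≤ 1 := by
      rw [Complex.normSq_eq_norm_sq]
      calc ‖z‖ ^ 2 ≤ 1^2 := by
            apply pow_le_pow_left₀ (norm_nonneg z) ?_ 2
            simpa using hcon
        _ = 1 := one_pow 2
    simpa [Complex.normSq_apply, sq] using this
  rcases eq_or_ne b 0 with hb0 | hb0
  · have ht : a^3 + A*a^2 + B*a + C = 0 := by rw [hb0] at h1; ring_nf at h1 ⊢; linarith
    have hra := abc_realRoot A B C a hA hAB hBC ht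
    have h1a : (1:ℝ) < |a| := by rw [abs_of_neg (by linarith [hra.2] : a < 0)]; linarith [hra.2]
    have hn : ‖z‖ = |a| := by
      have hz : z = (a:ℂ) := Complex.ext rfl (by simpa using hb0)
      rw [hz, Complex.norm_real, Real.norm_eq_abs]
    rw [hn] at hcon; linarith
  · have h2' : 3*a^2 - b^2 + 2*A*a + B = 0 :=
      (mul_eq_zero.mp h2).resolve_right hb0
    have hC : C = (a^2+b^2)*(2*a+A) := by linear_combination h1 - a*h2'
    have ht : (-(A+2*a))^3 + A*(-(A+2*a))^2 + B*(-(A+2*a)) + C = 0 := by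
      linear_combination (-(A+2*a))*h2' + hC
    have hr := abc_realRoot A B C (-(A+2*a)) hA hAB hBC ht
    have hmpos : 0 < a^2 + b^2 := by positivity
    nlinarith [hr.1, hr.2, hC, hm, hmpos]

noncomputable def abcMc (A B C : ℝ) : Matrix (Fin 3) (Fin 3) ℂ :=
  !![0, 0, -(C : ℂ); 1, 0, -(B : ℂ); 0, 1, -(A : ℂ)]

lemma abc_detMc (A B C : ℝ) (z : ℂ) :
    (z • (1 : Matrix (Fin 3) (Fin 3) ℂ) - abcMc A B C).det
      = z^3 + (A:ℂ)*z^2 + (B:ℂ)*z + (C:ℂ) := by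
  simp [abcMc, Matrix.det_fin_three, Matrix.smul_apply, Matrix.one_apply]
  ring

lemma abc_specAc_lt (A B C : ℝ)
    (Ac : Matrix (Fin 3) (Fin 3) ℂ) (hAc : Ac * abcMc A B C = 1)
    (hcr : ∀ z : ℂ, z^3 + (A:ℂ)*z^2 + (B:ℂ)*z + (C:ℂ) = 0 → 1 < ‖z‖)
    (w : ℂ) (hw : w ∈ spectrum ℂ Ac) : ‖w‖₊ < 1 := by
  have hdetAc : Ac.det ≠ 0 := by
    intro h0
    have := congrArg Matrix.det hAc
    rw [Matrix.det_mul, h0, zero_mul] at this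
    simp at this
  have hdet : (w • (1 : Matrix (Fin 3) (Fin 3) ℂ) - Ac).det = 0 := by
    rw [spectrum.mem_iff] at hw
    by_contra hd
    exact hw ((Matrix.isUnit_iff_isUnit_det _).mpr (isUnit_iff_ne_zero.mpr (by
      rwa [Algebra.algebraMap_eq_smul_one])))
  have hfact : w • (1 : Matrix (Fin 3) (Fin 3) ℂ) - Ac = Ac * (w • abcMc A B C - 1) := by
    rw [mul_sub, Matrix.mul_smul, hAc, mul_one]
  have hdet2 : (w • abcMc A B C - 1).det = 0 := by
    rw [hfact, Matrix.det_mul] at hdet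
    exact (mul_eq_zero.mp hdet).resolve_left hdetAc
  have hw0 : w ≠ 0 := by
    intro h0
    rw [h0, zero_smul, zero_sub, Matrix.det_neg, Matrix.det_one] at hdet2
    simp at hdet2
  have hfact2 : w • abcMc A B C - 1
      = (-w) • (w⁻¹ • (1 : Matrix (Fin 3) (Fin 3) ℂ) - abcMc A B C) := by
    rw [smul_sub, smul_smul, neg_mul, mul_inv_cancel₀ hw0, neg_smul, one_smul, neg_smul,
      sub_neg_eq_add]
    abel
  have hdet3 : (w⁻¹ • (1 : Matrix (Fin 3) (Fin 3) ℂ) - abcMc A B C).det = 0 := by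
    rw [hfact2, Matrix.det_smul] at hdet2
    have hne : (-w) ^ (3:ℕ) ≠ 0 := pow_ne_zero _ (neg_ne_zero.mpr hw0)
    simpa [Fintype.card_fin, hne] using hdet2
  have hinv : 1 < ‖w⁻¹‖ := by
    apply hcr
    rw [← abc_detMc A B C (w⁻¹)]
    exact hdet3
  rw [norm_inv] at hinv
  have hwn : ‖w‖ < 1 := by
    rcases lt_or_ge ‖w‖ 1 with h | h
    · exact h
    · exfalso
      have : ‖w‖⁻¹ ≤ 1 := inv_le_one_of_one_le₀ h
      linarith
  exact_mod_cast hwn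

lemma abc_existsN (Ac : Matrix (Fin 3) (Fin 3) ℂ)
    (hspec : ∀ w ∈ spectrum ℂ Ac, ‖w‖₊ < 1) :
    ∃ N : ℕ, 1 ≤ N ∧ ∃ c : ℝ, 0 ≤ c ∧ c < 1 ∧
      ∀ (k : ℕ) (v : Fin 3 → ℂ), ‖(Ac ^ (N*k)).mulVec v‖ ≤ c^k * ‖v‖ := by
  letI : NormedRing (Matrix (Fin 3) (Fin 3) ℂ) := Matrix.linftyOpNormedRing
  letI : NormedAlgebra ℂ (Matrix (Fin 3) (Fin 3) ℂ) := Matrix.linftyOpNormedAlgebra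
  haveI : CompleteSpace (Matrix (Fin 3) (Fin 3) ℂ) := FiniteDimensional.complete ℂ _
  have hrad : spectralRadius ℂ Ac < 1 := by
    have := spectrum.spectralRadius_lt_of_forall_lt (a := Ac) (r := 1) hspec
    simpa using this
  have hg := spectrum.pow_nnnorm_pow_one_div_tendsto_nhds_spectralRadius Ac
  have hev : ∀ᶠ n : ℕ in Filter.atTop,
      (‖Ac ^ n‖₊ : ENNReal) ^ (1 / (n:ℝ)) < 1 := hg.eventually_lt_const hrad
  obtain ⟨N, hN1, hN⟩ := (hev.and (Filter.eventually_ge_atTop 1)).exists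
  refine ⟨N, hN, ‖Ac ^ N‖, norm_nonneg _, ?_, ?_⟩
  · have hlt : (‖Ac ^ N‖₊ : ENNReal) < 1 := by
      by_contra hge
      push_neg at hge
      have : (1:ENNReal) ≤ (‖Ac ^ N‖₊ : ENNReal) ^ (1 / (N:ℝ)) := by
        calc (1:ENNReal) = 1 ^ (1/(N:ℝ)) := by simp
          _ ≤ _ := ENNReal.rpow_le_rpow hge (by positivity)
      exact absurd hN1 (not_lt.mpr this)
    have hlt' : ‖Ac ^ N‖₊ < 1 := by exact_mod_cast hlt
    exact_mod_cast hlt'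
  · intro k v
    rcases Nat.eq_zero_or_pos k with hk | hk
    · simp [hk, Matrix.one_mulVec]
    · calc ‖(Ac ^ (N*k)).mulVec v‖ ≤ ‖Ac ^ (N*k)‖ * ‖v‖ :=
            Matrix.linfty_opNorm_mulVec _ _
        _ ≤ ‖Ac ^ N‖^k * ‖v‖ := by
            apply mul_le_mul_of_nonneg_right _ (norm_nonneg v)
            rw [pow_mul]
            exact norm_pow_le' (Ac ^ N) hk

theorem stmt10 (A B C : ℤ) (T : Set (Fin 3 → ℝ)) (hT : IsABCTile A B C T)
    (hAB : A < B) (hC : C < 2 * (B - A) + 2) :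
    (T ∩ tileTranslate (toR ![2 * (B - A) + 2, 2 * (A - 1), 2]) T).Nonempty ∧
    (T ∩ tileTranslate (toR (-![2 * (B - A) + 2, 2 * (A - 1), 2])) T).Nonempty := by
  obtain ⟨hA1, hABle, hBC, hTne, hTcomp, hvol, hset⟩ := hT
  set M := Mmat A B C with hM
  have hdet : M.det = -(C:ℝ) := by
    simp [hM, Mmat, Matrix.det_fin_three]
  have hCR : (0:ℝ) < (C:ℝ) := by exact_mod_cast (by linarith : (0:ℤ) < C)
  have hdetu : IsUnit M.det := by
    rw [hdet]; exact isUnit_iff_ne_zero.mpr (by linarith)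
  set Minv := M⁻¹ with hMinvdef
  have hIL : Minv * M = 1 := Matrix.nonsing_inv_mul M hdetu
  have hIR : M * Minv = 1 := Matrix.mul_nonsing_inv M hdetu
  have hMv : ∀ v : Fin 3 → ℝ, Minv.mulVec (M.mulVec v) = v := fun v => by
    rw [Matrix.mulVec_mulVec, hIL, Matrix.one_mulVec]
  -- the step maps
  have hstep : ∀ d ∈ Ddig C, ∀ x ∈ T, Minv.mulVec (x + d) ∈ T := by
    intro d hd x hx
    have hmem : x + d ∈ M.mulVec '' T := by
      rw [hset]
      exact Set.mem_biUnion hd ⟨x, hx, rfl⟩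
    obtain ⟨y, hyT, hy⟩ := hmem
    have heq : Minv.mulVec (x + d) = y := by rw [← hy, hMv]
    rwa [heq]
  have hzero : (0 : Fin 3 → ℝ) ∈ Ddig C :=
    ⟨0, le_refl 0, by linarith, by funext i; fin_cases i <;> simp⟩
  set i0 : ℤ := 2*C - (2*(B-A)+2) with hi0
  set dvec : Fin 3 → ℝ := ![(i0:ℝ), 0, 0] with hdvecdef
  have hdvec : dvec ∈ Ddig C := ⟨i0, by omega, by omega, rfl⟩
  have hstep0 : ∀ x ∈ T, Minv.mulVec x ∈ T := by
    intro x hx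
    simpa using hstep 0 hzero x hx
  have hstepd : ∀ x ∈ T, Minv.mulVec (x + dvec) ∈ T := fun x hx => hstep dvec hdvec x hx
  set sR : Fin 3 → ℝ := toR ![2 * (B - A) + 2, 2 * (A - 1), 2] with hsR
  -- the key algebraic identity
  have hkey : M.mulVec sR = -sR - dvec := by
    funext i
    fin_cases i <;>
      simp [hM, Mmat, Matrix.mulVec, dotProduct, Fin.sum_univ_three, hsR, toR,
        hdvecdef, hi0] <;> push_cast <;> ring
  have hs1 : Minv.mulVec sR = -sR - Minv.mulVec dvec := by
    have h := hMv sR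
    rw [hkey, Matrix.mulVec_sub, Matrix.mulVec_neg] at h
    calc Minv.mulVec sR
        = -(-(Minv.mulVec sR) - Minv.mulVec dvec) - Minv.mulVec dvec := by abel
      _ = -sR - Minv.mulVec dvec := by rw [h]
  have hs2 : Minv.mulVec (Minv.mulVec sR) = sR + Minv.mulVec dvec - Minv.mulVec (Minv.mulVec dvec) := by
    rw [hs1, Matrix.mulVec_sub, Matrix.mulVec_neg, hs1]
    abel
  -- the sequence
  obtain ⟨x0, hx0⟩ := hTne
  set z : ℕ → (Fin 3 → ℝ) × (Fin 3 → ℝ) :=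
    fun n => Nat.rec (x0, x0)
      (fun _ p => (Minv.mulVec (Minv.mulVec p.1 + dvec),
                   Minv.mulVec (Minv.mulVec (p.2 + dvec)))) n with hz
  set W : ℕ → (Fin 3 → ℝ) := fun n => (Minv^(2*n)).mulVec sR with hWdef
  have hW0 : W 0 = sR := by simp [hWdef, Matrix.one_mulVec]
  have hWsucc : ∀ n, W (n+1) = Minv.mulVec (Minv.mulVec (W n)) := by
    intro n
    simp only [hWdef, Matrix.mulVec_mulVec]
    congr 1
    rw [show 2*(n+1) = 1 + (1 + 2*n) from by ring, pow_add, pow_add, pow_one]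
  have hinv : ∀ n, (z n).1 ∈ T ∧ (z n).2 ∈ T ∧ (z n).2 = (z n).1 + sR - W n := by
    intro n
    induction n with
    | zero =>
      refine ⟨hx0, hx0, ?_⟩
      rw [hW0]; show x0 = x0 + sR - sR; abel
    | succ n ih =>
      obtain ⟨h1, h2, h3⟩ := ih
      refine ⟨hstepd _ (hstep0 _ h1), hstep0 _ (hstepd _ h2), ?_⟩
      show Minv.mulVec (Minv.mulVec ((z n).2 + dvec))
          = Minv.mulVec (Minv.mulVec (z n).1 + dvec) + sR - W (n+1)
      rw [h3, hWsucc n]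
      simp only [Matrix.mulVec_add, Matrix.mulVec_sub]
      rw [hs2]
      abel
  -- complexification and norm estimates
  have hMc : M.map (⇑Complex.ofRealHom) = abcMc (A:ℝ) (B:ℝ) (C:ℝ) := by
    ext i j
    fin_cases i <;> fin_cases j <;> simp [hM, Mmat, abcMc]
  set Ac : Matrix (Fin 3) (Fin 3) ℂ := Minv.map (⇑Complex.ofRealHom) with hAcdef
  have hAcMc : Ac * abcMc (A:ℝ) (B:ℝ) (C:ℝ) = 1 := by
    rw [← hMc, hAcdef, ← Matrix.map_mul, hIL]
    exact Matrix.map_one _ (map_zero _) (map_one _)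
  have hA1R : (1:ℝ) ≤ (A:ℝ) := by exact_mod_cast hA1
  have hABR : (A:ℝ) ≤ (B:ℝ) := by exact_mod_cast hABle
  have hBCR : (B:ℝ) + 1 ≤ (C:ℝ) := by exact_mod_cast (by omega : B + 1 ≤ C)
  have hspecAc : ∀ w ∈ spectrum ℂ Ac, ‖w‖₊ < 1 :=
    abc_specAc_lt (A:ℝ) (B:ℝ) (C:ℝ) Ac hAcMc
      (fun zz hzz => abc_cRoot (A:ℝ) (B:ℝ) (C:ℝ) zz hA1R hABR hBCR hzz)
  obtain ⟨N, hN1, c, hc0, hc1, hbound⟩ := abc_existsN Ac hspecAc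
  -- transfer the bound to the real side
  have hmappow : ∀ m : ℕ, (Minv ^ m).map (⇑Complex.ofRealHom) = Ac ^ m := by
    intro m
    have : (Complex.ofRealHom.mapMatrix : Matrix (Fin 3) (Fin 3) ℝ →+* Matrix (Fin 3) (Fin 3) ℂ)
        (Minv ^ m) = (Complex.ofRealHom.mapMatrix Minv) ^ m := map_pow _ _ _
    simpa [RingHom.mapMatrix_apply, hAcdef] using this
  have hmapvec : ∀ (Q : Matrix (Fin 3) (Fin 3) ℝ) (v : Fin 3 → ℝ),
      (Q.map (⇑Complex.ofRealHom)).mulVec (fun i => ((v i : ℝ) : ℂ))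
        = fun i => (((Q.mulVec v) i : ℝ) : ℂ) := by
    intro Q v
    funext i
    simp [Matrix.mulVec, dotProduct, Matrix.map_apply]
  have hnormeq : ∀ w : Fin 3 → ℝ, ‖(fun i => ((w i : ℝ) : ℂ))‖ = ‖w‖ := by
    intro w
    simp [Pi.norm_def, Complex.nnnorm_real]
  have hWb : ∀ k : ℕ, ‖W (N*k)‖ ≤ (c^2)^k * ‖sR‖ := by
    intro k
    have h1 : ((Ac ^ (N*(2*k))).mulVec (fun i => ((sR i : ℝ) : ℂ)))
        = fun i => (((W (N*k)) i : ℝ) : ℂ) := by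
      rw [← hmappow, hmapvec]
      simp only [hWdef]
      congr 2
      ring
    have h2 := hbound (2*k) (fun i => ((sR i : ℝ) : ℂ))
    rw [h1] at h2
    rw [hnormeq, hnormeq] at h2
    calc ‖W (N*k)‖ ≤ c^(2*k) * ‖sR‖ := h2
      _ = (c^2)^k * ‖sR‖ := by rw [← pow_mul]
  have hc2 : c^2 < 1 := by nlinarith
  have hc2nn : 0 ≤ c^2 := sq_nonneg c
  have hWlim : Filter.Tendsto (fun k => W (N*k)) Filter.atTop (nhds 0) := by
    rw [tendsto_zero_iff_norm_tendsto_zero]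
    apply squeeze_zero (fun k => norm_nonneg _) hWb
    have := (tendsto_pow_atTop_nhds_zero_of_lt_one hc2nn hc2).mul_const ‖sR‖
    simpa using this
  obtain ⟨x, hxT, φ, hφ, hxlim⟩ := hTcomp.tendsto_subseq (fun k => (hinv (N*k)).1)
  have hylim : Filter.Tendsto (fun k => (z (N*(φ k))).2) Filter.atTop (nhds (x + sR)) := by
    have heq : (fun k => (z (N*(φ k))).2)
        = fun k => ((fun j => (z (N*j)).1) ∘ φ) k + sR - W (N*(φ k)) := by
      funext k
      exact (hinv (N * φ k)).2.2
    rw [heq]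
    have hWφ : Filter.Tendsto (fun k => W (N*(φ k))) Filter.atTop (nhds 0) :=
      hWlim.comp (hφ.tendsto_atTop)
    have := (hxlim.add (tendsto_const_nhds (x := sR))).sub hWφ
    simpa using this
  have hyT : x + sR ∈ T :=
    hTcomp.isClosed.mem_of_tendsto hylim
      (Filter.Eventually.of_forall fun k => (hinv (N*(φ k))).2.1)
  have hnegs : toR (-![2 * (B - A) + 2, 2 * (A - 1), 2]) = -sR := by
    funext i
    simp [toR, hsR]
  constructor
  · exact ⟨x + sR, hyT, ⟨x, hxT, rfl⟩⟩
  · refine ⟨x, hxT, ⟨x + sR, hyT, ?_⟩⟩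
    rw [hnegs]
    funext i
    simp
end

section
/- Let T be an ABC-tile having exactly 14 neighbors, let α be a neighbor of T, let P = (1,0,0), and let i, j be integers with 1 ≤ j ≤ i ≤ C − 1. Write B_γ = T ∩ (T + γ) for γ ∈ ℤ³. Then (B_α + (i−j)·P) ∩ (B_α + i·P) = ∅ and (B_α + (i−j)·P) ∩ (B_{α+P} + i·P) = ∅. -/
open MeasureTheory Filter

noncomputable def NinvM (A B C : ℤ) : Matrix (Fin 3) (Fin 3) ℝ :=
  !![-(B : ℝ)/(C : ℝ), 1, 0; -(A : ℝ)/(C : ℝ), 0, 1; -1/(C : ℝ), 0, 0]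

def MzI (A B C : ℤ) : Matrix (Fin 3) (Fin 3) ℤ :=
  !![0, 0, -C; 1, 0, -B; 0, 1, -A]

def e1i : Fin 3 → ℤ := ![1, 0, 0]

def e1r : Fin 3 → ℝ := ![1, 0, 0]

def good (T : Set (Fin 3 → ℝ)) (v : Fin 3 → ℤ) : Prop :=
  (T ∩ tileTranslate (toR v) T).Nonempty


lemma root_lt_one (A B C : ℤ) (h1 : 1 ≤ A) (hAB : A ≤ B) (hBC : B < C) (μ : ℂ)
    (hμ : (C : ℂ) * μ ^ 3 + (B : ℂ) * μ ^ 2 + (A : ℂ) * μ + 1 = 0) : ‖μ‖ < 1 := by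
  by_contra hcon
  push_neg at hcon
  have hμ0 : μ ≠ 0 := by
    intro h; rw [h] at hcon; simp at hcon; linarith
  set l : ℂ := μ⁻¹ with hl
  have habs : ‖l‖ ≤ 1 := by
    rw [hl, norm_inv]
    exact inv_le_one_of_one_le₀ hcon
  have hp : l ^ 3 + (A : ℂ) * l ^ 2 + (B : ℂ) * l + (C : ℂ) = 0 := by
    have h3 : l ^ 3 * ((C : ℂ) * μ ^ 3 + (B : ℂ) * μ ^ 2 + (A : ℂ) * μ + 1)
        = l ^ 3 + (A : ℂ) * l ^ 2 + (B : ℂ) * l + (C : ℂ) := by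
      rw [hl]; field_simp; ring
    rw [← h3, hμ, mul_zero]
  have h4 : l ^ 4 + ((A : ℂ) - 1) * l ^ 3 + ((B : ℂ) - (A : ℂ)) * l ^ 2
      + ((C : ℂ) - (B : ℂ)) * l = (C : ℂ) := by
    linear_combination (l - 1) * hp
  -- take real parts
  have hre : (l ^ 4).re + ((A : ℝ) - 1) * (l ^ 3).re + ((B : ℝ) - (A : ℝ)) * (l ^ 2).re
      + ((C : ℝ) - (B : ℝ)) * l.re = (C : ℝ) := by
    have := congrArg Complex.re h4
    simpa [Complex.add_re, Complex.sub_re, Complex.mul_re, Complex.ofReal_intCast,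
      Complex.intCast_re, Complex.intCast_im, Complex.one_re, Complex.one_im] using this
  have hb : ∀ k : ℕ, (l ^ k).re ≤ 1 := by
    intro k
    calc (l ^ k).re ≤ ‖l ^ k‖ := Complex.re_le_norm _
      _ = ‖l‖ ^ k := by rw [norm_pow]
      _ ≤ 1 := pow_le_one₀ (norm_nonneg l) habs
  have hA : (1 : ℝ) ≤ (A : ℝ) := by exact_mod_cast h1
  have hAB' : (A : ℝ) ≤ (B : ℝ) := by exact_mod_cast hAB
  have hBC' : (B : ℝ) + 1 ≤ (C : ℝ) := by exact_mod_cast hBC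
  have hre1 : (1 : ℝ) ≤ l.re := by
    have b4 := hb 4; have b3 := hb 3; have b2 := hb 2
    nlinarith [hre]
  have hrele : l.re ≤ 1 := le_trans (Complex.re_le_norm l) habs
  have hlre : l.re = 1 := le_antisymm hrele hre1
  have habs1 : ‖l‖ = 1 := le_antisymm habs (hlre ▸ Complex.re_le_norm l)
  have him : l.im = 0 := by
    have h2 : l.re * l.re + l.im * l.im = 1 := by
      have := Complex.sq_norm l
      rw [habs1] at this
      simpa [Complex.normSq_apply, sq] using this.symm
    nlinarith [hlre]
  have hl1 : l = 1 := Complex.ext (by simp [hlre]) (by simp [him])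
  rw [hl1] at hp
  have : (1 : ℝ) + A + B + C = 0 := by
    have := congrArg Complex.re hp
    simpa using this
  have : (0:ℝ) < 1 + A + B + C := by nlinarith
  linarith

lemma conv_pow (A B C : ℤ) (h1 : 1 ≤ A) (hAB : A ≤ B) (hBC : B < C) (w : Fin 3 → ℝ) :
    Tendsto (fun k : ℕ => (NinvM A B C ^ k).mulVec w) atTop (nhds 0) := by
  have hC0 : (C : ℝ) ≠ 0 := by
    have : (0:ℤ) < C := by omega
    exact_mod_cast this.ne'
  have hC0' : (C : ℂ) ≠ 0 := by exact_mod_cast (by omega : C ≠ 0)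
  set NC : Matrix (Fin 3) (Fin 3) ℂ := Complex.ofRealHom.mapMatrix (NinvM A B C) with hNC
  -- spectrum bound
  have hspec : ∀ μ ∈ spectrum ℂ NC, ‖μ‖₊ < 1 := by
    intro μ hμ
    rw [spectrum.mem_iff] at hμ
    have hdet : (algebraMap ℂ (Matrix (Fin 3) (Fin 3) ℂ) μ - NC).det = 0 := by
      by_contra hd
      exact hμ ((Matrix.isUnit_iff_isUnit_det _).mpr (isUnit_iff_ne_zero.mpr hd))
    have hmat : algebraMap ℂ (Matrix (Fin 3) (Fin 3) ℂ) μ - NC =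
        !![μ + (B:ℂ)/(C:ℂ), -1, 0; (A:ℂ)/(C:ℂ), μ, -1; 1/(C:ℂ), 0, μ] := by
      ext i j
      fin_cases i <;> fin_cases j <;>
        simp [hNC, NinvM, Matrix.algebraMap_matrix_apply, Matrix.vecHead, Matrix.vecTail] <;>
        ring
    rw [hmat, Matrix.det_fin_three] at hdet
    simp [Matrix.vecHead, Matrix.vecTail] at hdet
    have hq : (C : ℂ) * μ ^ 3 + (B : ℂ) * μ ^ 2 + (A : ℂ) * μ + 1 = 0 := by
      field_simp at hdet
      linear_combination hdet
    have habs := root_lt_one A B C h1 hAB hBC μ hq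
    exact_mod_cast habs
  -- transfer to CLM
  set a : EuclideanSpace ℂ (Fin 3) →L[ℂ] EuclideanSpace ℂ (Fin 3) :=
    Matrix.toEuclideanCLM (𝕜 := ℂ) NC with ha
  have hsp_eq : spectrum ℂ a = spectrum ℂ NC := AlgEquiv.spectrum_eq _ _
  have hρ : spectralRadius ℂ a < 1 := by
    rw [spectralRadius]
    rw [← sSup_image]
    rcases Set.eq_empty_or_nonempty ((fun k => (‖k‖₊ : ENNReal)) '' spectrum ℂ a) with he | hne
    · rw [he, sSup_empty]; exact zero_lt_one
    · have hfin : ((fun k => (‖k‖₊ : ENNReal)) '' spectrum ℂ a).Finite := by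
        apply Set.Finite.image
        rw [hsp_eq]
        exact Matrix.finite_spectrum NC
      obtain ⟨μ, hμs, hμe⟩ := Set.Nonempty.csSup_mem hne hfin
      rw [← hμe]
      show (‖μ‖₊ : ENNReal) < 1
      exact_mod_cast hspec μ (hsp_eq ▸ hμs)
  -- Gelfand
  have htend := spectrum.pow_nnnorm_pow_one_div_tendsto_nhds_spectralRadius a
  obtain ⟨r, hρr, hr1⟩ := exists_between hρ
  have hrtop : r ≠ ⊤ := (hr1.trans_le le_top).ne
  have hev : ∀ᶠ n : ℕ in atTop, (‖a ^ n‖₊ : ENNReal) ^ (1 / (n : ℝ)) < r :=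
    htend.eventually_lt_const hρr
  set rn : NNReal := r.toNNReal with hrn
  have hrcoe : (rn : ENNReal) = r := ENNReal.coe_toNNReal hrtop
  have hrn1 : rn < 1 := by
    have := (ENNReal.toNNReal_lt_toNNReal hrtop ENNReal.one_ne_top).mpr hr1
    simpa using this
  have hbound : ∀ᶠ n : ℕ in atTop, ‖a ^ n‖ ≤ (rn : ℝ) ^ n := by
    filter_upwards [hev, eventually_ge_atTop 1] with n hn hn1
    have hne : (n : ℝ) ≠ 0 := by positivity
    have h2 := ENNReal.rpow_lt_rpow hn (show (0:ℝ) < (n:ℝ) by positivity)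
    rw [← ENNReal.rpow_mul, one_div, inv_mul_cancel₀ hne, ENNReal.rpow_one,
      ENNReal.rpow_natCast, ← hrcoe, ← ENNReal.coe_pow] at h2
    have h3 : ‖a ^ n‖₊ ≤ rn ^ n := (ENNReal.coe_lt_coe.mp h2).le
    calc ‖a ^ n‖ = ((‖a ^ n‖₊ : NNReal) : ℝ) := (coe_nnnorm _).symm
      _ ≤ ((rn ^ n : NNReal) : ℝ) := by exact_mod_cast h3
      _ = (rn : ℝ) ^ n := by push_cast; ring
  have hnorm0 : Tendsto (fun n : ℕ => ‖a ^ n‖) atTop (nhds 0) := by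
    apply squeeze_zero' (Eventually.of_forall fun n => norm_nonneg _) hbound
    have := tendsto_pow_atTop_nhds_zero_of_lt_one (by positivity : (0:ℝ) ≤ (rn:ℝ))
      (by exact_mod_cast hrn1)
    exact this
  -- vector convergence
  set wc : Fin 3 → ℂ := fun i => ((w i : ℝ) : ℂ) with hwc
  set xw : EuclideanSpace ℂ (Fin 3) := (WithLp.equiv 2 (Fin 3 → ℂ)).symm wc with hxw
  have hcast : ∀ (k : ℕ) (i : Fin 3),
      ((((NinvM A B C) ^ k).mulVec w) i : ℂ) = ((NC ^ k).mulVec wc) i := by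
    intro k i
    rw [hNC, ← map_pow]
    simp only [Matrix.mulVec, dotProduct, RingHom.mapMatrix_apply, Matrix.map_apply,
      Complex.ofRealHom_eq_coe, hwc, Fin.sum_univ_three]
    push_cast
    ring
  have hcomp : ∀ (x : EuclideanSpace ℂ (Fin 3)) (i : Fin 3), ‖x i‖ ≤ ‖x‖ := by
    intro x i
    rw [EuclideanSpace.norm_eq]
    have h1 : ‖x i‖ ^ 2 ≤ ∑ j, ‖x j‖ ^ 2 := by
      apply Finset.single_le_sum (f := fun j => ‖x j‖ ^ 2) (fun j _ => by positivity)
        (Finset.mem_univ i)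
    calc ‖x i‖ = Real.sqrt (‖x i‖ ^ 2) := by rw [Real.sqrt_sq (norm_nonneg _)]
      _ ≤ _ := Real.sqrt_le_sqrt h1
  have happ : ∀ k : ℕ, (a ^ k) xw = (WithLp.equiv 2 (Fin 3 → ℂ)).symm ((NC ^ k).mulVec wc) := by
    intro k
    rw [ha, ← map_pow]
    rw [hxw, WithLp.equiv_symm_apply, Matrix.toEuclideanCLM_toLp]
  rw [tendsto_pi_nhds]
  intro i
  simp only [Pi.zero_apply]
  apply squeeze_zero_norm (a := fun k => ‖a ^ k‖ * ‖xw‖)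
  · intro k
    have e1 : ‖(((NinvM A B C) ^ k).mulVec w) i‖ = ‖((NC ^ k).mulVec wc) i‖ := by
      rw [← hcast k i, Complex.norm_real]
    rw [e1]
    have e2 : ((NC ^ k).mulVec wc) i = ((a ^ k) xw) i := by
      rw [happ k]
      rfl
    rw [e2]
    calc ‖((a ^ k) xw) i‖ ≤ ‖(a ^ k) xw‖ := hcomp _ i
      _ ≤ ‖a ^ k‖ * ‖xw‖ := (a ^ k).le_opNorm xw
  · have := hnorm0.mul_const ‖xw‖
    simpa using this

section Tile

variable {A B C : ℤ} {T : Set (Fin 3 → ℝ)}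

lemma toR_add (u v : Fin 3 → ℤ) : toR (u + v) = toR u + toR v := by
  funext i; simp [toR]
lemma toR_neg (u : Fin 3 → ℤ) : toR (-u) = -toR u := by
  funext i; simp [toR]
lemma toR_smul (c : ℤ) (u : Fin 3 → ℤ) : toR (c • u) = (c : ℝ) • toR u := by
  funext i; simp [toR]
lemma smul_e1r (b : ℤ) : (b : ℝ) • e1r = ![(b : ℝ), 0, 0] := by
  funext i; fin_cases i <;> simp [e1r]
lemma toR_e1i : toR e1i = e1r := by
  funext i; fin_cases i <;> simp [toR, e1i, e1r]

lemma hCne (hT : IsABCTile A B C T) : (C : ℝ) ≠ 0 := by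
  have h1 := hT.1; have h2 := hT.2.1; have h3 := hT.2.2.1
  have : (0:ℤ) < C := by omega
  exact_mod_cast this.ne'

lemma NinvM_mul_Mmat (hT : IsABCTile A B C T) : NinvM A B C * Mmat A B C = 1 := by
  have hC := hCne hT
  ext i j
  fin_cases i <;> fin_cases j <;>
    simp [NinvM, Mmat, Matrix.mul_apply, Fin.sum_univ_three, Matrix.one_apply,
      Matrix.vecHead, Matrix.vecTail] <;>
    field_simp <;> ring

lemma toR_mulVec (v : Fin 3 → ℤ) :
    (Mmat A B C).mulVec (toR v) = toR ((MzI A B C).mulVec v) := by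
  funext i
  fin_cases i <;>
    simp [Mmat, MzI, Matrix.mulVec, dotProduct, Fin.sum_univ_three, toR,
      Matrix.vecHead, Matrix.vecTail] <;>
    push_cast <;> ring

lemma memT_digit (hT : IsABCTile A B C T) {t : Fin 3 → ℝ} (ht : t ∈ T) {b : ℤ}
    (hb0 : 0 ≤ b) (hb1 : b ≤ C - 1) :
    (NinvM A B C).mulVec (t + (b : ℝ) • e1r) ∈ T := by
  have hE := hT.2.2.2.2.2.2
  have hd : ![(b : ℝ), 0, 0] ∈ Ddig C := ⟨b, hb0, by omega, rfl⟩
  have hmem : t + (b : ℝ) • e1r ∈ ⋃ d ∈ Ddig C, tileTranslate d T := by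
    apply Set.mem_biUnion hd
    rw [smul_e1r]
    exact ⟨t, ht, rfl⟩
  rw [← hE] at hmem
  obtain ⟨s, hs, hMs⟩ := hmem
  rw [← hMs, Matrix.mulVec_mulVec, NinvM_mul_Mmat hT, Matrix.one_mulVec]
  exact hs

lemma good_neg (hg : good T v) : good T (-v) := by
  obtain ⟨x, hxT, y, hyT, hxy⟩ := hg
  exact ⟨y, hyT, x, hxT, by rw [toR_neg, ← hxy]; exact add_neg_cancel_right _ _⟩

lemma good_chain (hT : IsABCTile A B C T) {v w : Fin 3 → ℤ} {c : ℤ}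
    (hg : good T w) (hrel : (MzI A B C).mulVec v = w + c • e1i)
    (hc0 : -(C - 1) ≤ c) (hc1 : c ≤ C - 1) : good T v := by
  obtain ⟨x, hxT, y, hyT, hxy⟩ := hg
  -- x = y + toR w
  set b : ℤ := max c 0 with hb
  set a : ℤ := max (-c) 0 with ha
  have hba : b - a = c := by omega
  have hx' := memT_digit hT hxT (b := b) (by omega) (by omega)
  have hy' := memT_digit hT hyT (b := a) (by omega) (by omega)
  refine ⟨(NinvM A B C).mulVec (x + (b : ℝ) • e1r), hx',
    (NinvM A B C).mulVec (y + (a : ℝ) • e1r), hy', ?_⟩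
  have hv : toR v = (NinvM A B C).mulVec (toR w + (c : ℝ) • e1r) := by
    have h1 : (NinvM A B C).mulVec ((Mmat A B C).mulVec (toR v)) = toR v := by
      rw [Matrix.mulVec_mulVec, NinvM_mul_Mmat hT, Matrix.one_mulVec]
    rw [← h1, toR_mulVec, hrel, toR_add, toR_smul, toR_e1i]
  have hxy' : x = y + toR w := hxy.symm
  show (NinvM A B C).mulVec (y + (a : ℝ) • e1r) + toR v
      = (NinvM A B C).mulVec (x + (b : ℝ) • e1r)
  rw [hv, ← Matrix.mulVec_add]
  congr 1
  rw [hxy']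
  rw [show (b : ℝ) = (a : ℝ) + (c : ℝ) by exact_mod_cast congrArg (Int.cast : ℤ → ℝ) (by omega : b = a + c), add_smul]
  abel


lemma rel_toR (hT : IsABCTile A B C T) {v w : Fin 3 → ℤ} {c : ℤ}
    (hrel : (MzI A B C).mulVec v = w + c • e1i) :
    toR v = (NinvM A B C).mulVec (toR w + (c : ℝ) • e1r) := by
  have h1 : (NinvM A B C).mulVec ((Mmat A B C).mulVec (toR v)) = toR v := by
    rw [Matrix.mulVec_mulVec, NinvM_mul_Mmat hT, Matrix.one_mulVec]
  rw [← h1, toR_mulVec, hrel, toR_add, toR_smul, toR_e1i]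

/-- one-sided digit maps -/
noncomputable def gb (A B C : ℤ) (c : ℤ) (u : Fin 3 → ℝ) : Fin 3 → ℝ :=
  (NinvM A B C).mulVec (u + ((max c 0 : ℤ) : ℝ) • e1r)

noncomputable def ga (A B C : ℤ) (c : ℤ) (u : Fin 3 → ℝ) : Fin 3 → ℝ :=
  (NinvM A B C).mulVec (u + ((max (-c) 0 : ℤ) : ℝ) • e1r)

lemma gb_mem (hT : IsABCTile A B C T) {c : ℤ} (hc0 : -(C-1) ≤ c) (hc1 : c ≤ C - 1)
    {t : Fin 3 → ℝ} (ht : t ∈ T) : gb A B C c t ∈ T :=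
  memT_digit hT ht (by omega) (by omega)

lemma ga_mem (hT : IsABCTile A B C T) {c : ℤ} (hc0 : -(C-1) ≤ c) (hc1 : c ≤ C - 1)
    {t : Fin 3 → ℝ} (ht : t ∈ T) : ga A B C c t ∈ T :=
  memT_digit hT ht (by omega) (by omega)

lemma gb_ga_step (hT : IsABCTile A B C T) {v w : Fin 3 → ℤ} {c : ℤ}
    (hrel : (MzI A B C).mulVec v = w + c • e1i) (x y : Fin 3 → ℝ) :
    gb A B C c x - ga A B C c y - toR v = (NinvM A B C).mulVec (x - y - toR w) := by
  rw [gb, ga, rel_toR hT hrel, ← Matrix.mulVec_sub, ← Matrix.mulVec_sub]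
  congr 1
  rw [show ((max c 0 : ℤ) : ℝ) = ((max (-c) 0 : ℤ) : ℝ) + (c : ℝ) by
    exact_mod_cast congrArg (Int.cast : ℤ → ℝ) (by omega : max c 0 = max (-c) 0 + c), add_smul]
  abel

lemma good_cycle (hT : IsABCTile A B C T) (v0 v1 v2 v3 : Fin 3 → ℤ) (c0 c1 c2 c3 : ℤ)
    (h0 : (MzI A B C).mulVec v0 = v1 + c0 • e1i)
    (h1 : (MzI A B C).mulVec v1 = v2 + c1 • e1i)
    (h2 : (MzI A B C).mulVec v2 = v3 + c2 • e1i)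
    (h3 : (MzI A B C).mulVec v3 = v0 + c3 • e1i)
    (hb0 : -(C-1) ≤ c0 ∧ c0 ≤ C-1) (hb1 : -(C-1) ≤ c1 ∧ c1 ≤ C-1)
    (hb2 : -(C-1) ≤ c2 ∧ c2 ≤ C-1) (hb3 : -(C-1) ≤ c3 ∧ c3 ≤ C-1) :
    good T v0 := by
  obtain ⟨t0, ht0⟩ := hT.2.2.2.1
  set N := NinvM A B C with hN
  set φ : (Fin 3 → ℝ) → (Fin 3 → ℝ) :=
    fun u => gb A B C c0 (gb A B C c1 (gb A B C c2 (gb A B C c3 u))) with hφ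
  set ψ : (Fin 3 → ℝ) → (Fin 3 → ℝ) :=
    fun u => ga A B C c0 (ga A B C c1 (ga A B C c2 (ga A B C c3 u))) with hψ
  have hφT : ∀ t ∈ T, φ t ∈ T := fun t ht =>
    gb_mem hT hb0.1 hb0.2 (gb_mem hT hb1.1 hb1.2 (gb_mem hT hb2.1 hb2.2
      (gb_mem hT hb3.1 hb3.2 ht)))
  have hψT : ∀ t ∈ T, ψ t ∈ T := fun t ht =>
    ga_mem hT hb0.1 hb0.2 (ga_mem hT hb1.1 hb1.2 (ga_mem hT hb2.1 hb2.2
      (ga_mem hT hb3.1 hb3.2 ht)))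
  have key : ∀ x y : Fin 3 → ℝ,
      φ x - ψ y - toR v0 = (N ^ 4).mulVec (x - y - toR v0) := by
    intro x y
    have k3 := gb_ga_step hT h3 x y
    have k2 := gb_ga_step hT h2 (gb A B C c3 x) (ga A B C c3 y)
    have k1 := gb_ga_step hT h1 (gb A B C c2 (gb A B C c3 x)) (ga A B C c2 (ga A B C c3 y))
    have k0 := gb_ga_step hT h0 (gb A B C c1 (gb A B C c2 (gb A B C c3 x)))
      (ga A B C c1 (ga A B C c2 (ga A B C c3 y)))
    rw [hφ, hψ]
    simp only []
    rw [k0, k1, k2, k3]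
    rw [Matrix.mulVec_mulVec, Matrix.mulVec_mulVec, Matrix.mulVec_mulVec]
    congr 1
    rw [show (4 : ℕ) = 3 + 1 by rfl, pow_succ, pow_succ, pow_succ, pow_one]
  -- iterate
  have hxT : ∀ m, φ^[m] t0 ∈ T := by
    intro m; induction m with
    | zero => simpa using ht0
    | succ m ih => rw [Function.iterate_succ_apply']; exact hφT _ ih
  have hyT : ∀ m, ψ^[m] t0 ∈ T := by
    intro m; induction m with
    | zero => simpa using ht0
    | succ m ih => rw [Function.iterate_succ_apply']; exact hψT _ ih
  have hdm : ∀ m, φ^[m] t0 - ψ^[m] t0 - toR v0 = ((N ^ 4) ^ m).mulVec (-(toR v0)) := by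
    intro m; induction m with
    | zero => simp
    | succ m ih =>
        rw [Function.iterate_succ_apply', Function.iterate_succ_apply', key, ih,
          Matrix.mulVec_mulVec, ← pow_succ']
  have hconv : Tendsto (fun m : ℕ => ((N ^ 4) ^ m).mulVec (-(toR v0))) atTop (nhds 0) := by
    have hbase := conv_pow A B C hT.1 hT.2.1 hT.2.2.1 (-(toR v0))
    have hmul : Tendsto (fun m : ℕ => 4 * m) atTop atTop :=
      Filter.tendsto_atTop_atTop_of_monotone (fun a b h => by omega) (fun b => ⟨b, by omega⟩)
    have := hbase.comp hmul
    convert this using 2 with m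
    rw [Function.comp_apply, pow_mul]
  have hcpt : IsCompact T := hT.2.2.2.2.1
  obtain ⟨a, haT, σ, hσmono, hσtend⟩ := hcpt.tendsto_subseq hxT
  have hyL : Tendsto (fun m => ψ^[σ m] t0) atTop (nhds (a - toR v0)) := by
    have hyeq : ∀ m, ψ^[σ m] t0
        = φ^[σ m] t0 - toR v0 - ((N ^ 4) ^ (σ m)).mulVec (-(toR v0)) := by
      intro m
      have := hdm (σ m)
      linear_combination (norm := abel) -this
    simp_rw [hyeq]
    have h2 : Tendsto (fun m => ((N ^ 4) ^ (σ m)).mulVec (-(toR v0))) atTop (nhds 0) :=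
      hconv.comp hσmono.tendsto_atTop
    have := (hσtend.sub (tendsto_const_nhds (x := toR v0))).sub h2
    simpa using this
  have hLT : a - toR v0 ∈ T :=
    hcpt.isClosed.mem_of_tendsto hyL (Filter.Eventually.of_forall (fun m => hyT (σ m)))
  exact ⟨a, haT, a - toR v0, hLT, sub_add_cancel a (toR v0)⟩

end Tile

-- the seven positive neighbor candidates
section Seven
variable (A B : ℤ)
def q1 : Fin 3 → ℤ := ![1, 0, 0]
def q2 : Fin 3 → ℤ := ![A - 1, 1, 0]
def q3 : Fin 3 → ℤ := ![A, 1, 0]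
def q4 : Fin 3 → ℤ := ![B - A, A - 1, 1]
def q5 : Fin 3 → ℤ := ![B - A + 1, A - 1, 1]
def q6 : Fin 3 → ℤ := ![B - 1, A, 1]
def q7 : Fin 3 → ℤ := ![B, A, 1]
end Seven

section Goods
variable {A B C : ℤ} {T : Set (Fin 3 → ℝ)}

lemma good_q1 (hT : IsABCTile A B C T) : good T (q1) := by
  have h1 := hT.1; have hAB := hT.2.1; have hBC := hT.2.2.1
  apply good_cycle hT (q1) (q2 A) (q4 A B) (-(q7 A B)) (1-A) (A-B) (B-C) (C-1)
  · funext i; fin_cases i <;>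
      simp [MzI, e1i, q1, q2, Matrix.mulVec, dotProduct, Fin.sum_univ_three,
        Matrix.vecHead, Matrix.vecTail] <;> ring
  · funext i; fin_cases i <;>
      simp [MzI, e1i, q2, q4, Matrix.mulVec, dotProduct, Fin.sum_univ_three,
        Matrix.vecHead, Matrix.vecTail] <;> ring
  · funext i; fin_cases i <;>
      simp [MzI, e1i, q4, q7, Matrix.mulVec, dotProduct, Fin.sum_univ_three,
        Matrix.vecHead, Matrix.vecTail] <;> ring
  · funext i; fin_cases i <;>
      simp [MzI, e1i, q7, q1, Matrix.mulVec, dotProduct, Fin.sum_univ_three,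
        Matrix.vecHead, Matrix.vecTail] <;> ring
  all_goals constructor <;> omega

lemma good_nq7 (hT : IsABCTile A B C T) : good T (-(q7 A B)) := by
  have h1 := hT.1; have hAB := hT.2.1; have hBC := hT.2.2.1
  apply good_chain hT (c := C-1) (good_q1 hT)
  · funext i; fin_cases i <;>
      simp [MzI, e1i, q7, q1, Matrix.mulVec, dotProduct, Fin.sum_univ_three,
        Matrix.vecHead, Matrix.vecTail] <;> ring
  all_goals omega

lemma good_q7 (hT : IsABCTile A B C T) : good T (q7 A B) := by
  have := good_neg (good_nq7 hT); simpa using this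

lemma good_q4 (hT : IsABCTile A B C T) : good T (q4 A B) := by
  have h1 := hT.1; have hAB := hT.2.1; have hBC := hT.2.2.1
  apply good_chain hT (c := B-C) (good_nq7 hT)
  · funext i; fin_cases i <;>
      simp [MzI, e1i, q4, q7, Matrix.mulVec, dotProduct, Fin.sum_univ_three,
        Matrix.vecHead, Matrix.vecTail] <;> ring
  all_goals omega

lemma good_q2 (hT : IsABCTile A B C T) : good T (q2 A) := by
  have h1 := hT.1; have hAB := hT.2.1; have hBC := hT.2.2.1
  apply good_chain hT (c := A-B) (good_q4 hT)
  · funext i; fin_cases i <;>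
      simp [MzI, e1i, q2, q4, Matrix.mulVec, dotProduct, Fin.sum_univ_three,
        Matrix.vecHead, Matrix.vecTail] <;> ring
  all_goals omega

lemma good_q3 (hT : IsABCTile A B C T) : good T (q3 A) := by
  have h1 := hT.1; have hAB := hT.2.1; have hBC := hT.2.2.1
  apply good_cycle hT (q3 A) (q6 A B) (-(q3 A)) (-(q6 A B)) (1-B) (A-C) (B-1) (C-A)
  · funext i; fin_cases i <;>
      simp [MzI, e1i, q3, q6, Matrix.mulVec, dotProduct, Fin.sum_univ_three,
        Matrix.vecHead, Matrix.vecTail] <;> ring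
  · funext i; fin_cases i <;>
      simp [MzI, e1i, q6, q3, Matrix.mulVec, dotProduct, Fin.sum_univ_three,
        Matrix.vecHead, Matrix.vecTail] <;> ring
  · funext i; fin_cases i <;>
      simp [MzI, e1i, q3, q6, Matrix.mulVec, dotProduct, Fin.sum_univ_three,
        Matrix.vecHead, Matrix.vecTail] <;> ring
  · funext i; fin_cases i <;>
      simp [MzI, e1i, q6, q3, Matrix.mulVec, dotProduct, Fin.sum_univ_three,
        Matrix.vecHead, Matrix.vecTail] <;> ring
  all_goals constructor <;> omega

lemma good_q6 (hT : IsABCTile A B C T) : good T (q6 A B) := by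
  have h1 := hT.1; have hAB := hT.2.1; have hBC := hT.2.2.1
  apply good_chain hT (c := A-C) (good_neg (good_q3 hT))
  · funext i; fin_cases i <;>
      simp [MzI, e1i, q6, q3, Matrix.mulVec, dotProduct, Fin.sum_univ_three,
        Matrix.vecHead, Matrix.vecTail] <;> ring
  all_goals omega

lemma good_q5 (hT : IsABCTile A B C T) : good T (q5 A B) := by
  have h1 := hT.1; have hAB := hT.2.1; have hBC := hT.2.2.1
  apply good_cycle hT (q5 A B) (-(q5 A B)) (q5 A B) (-(q5 A B))
    (B-A+1-C) (C-(B-A+1)) (B-A+1-C) (C-(B-A+1))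
  · funext i; fin_cases i <;>
      simp [MzI, e1i, q5, Matrix.mulVec, dotProduct, Fin.sum_univ_three,
        Matrix.vecHead, Matrix.vecTail] <;> ring
  · funext i; fin_cases i <;>
      simp [MzI, e1i, q5, Matrix.mulVec, dotProduct, Fin.sum_univ_three,
        Matrix.vecHead, Matrix.vecTail] <;> ring
  · funext i; fin_cases i <;>
      simp [MzI, e1i, q5, Matrix.mulVec, dotProduct, Fin.sum_univ_three,
        Matrix.vecHead, Matrix.vecTail] <;> ring
  · funext i; fin_cases i <;>
      simp [MzI, e1i, q5, Matrix.mulVec, dotProduct, Fin.sum_univ_three,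
        Matrix.vecHead, Matrix.vecTail] <;> ring
  all_goals constructor <;> omega

end Goods

section S14sec
variable {A B C : ℤ} {T : Set (Fin 3 → ℝ)}

lemma eq_vec_iff (v : Fin 3 → ℤ) (a b c : ℤ) :
    v = ![a, b, c] ↔ v 0 = a ∧ v 1 = b ∧ v 2 = c := by
  constructor
  · intro h; refine ⟨?_, ?_, ?_⟩ <;> rw [h] <;> simp
  · rintro ⟨h0, h1, h2⟩; funext i; fin_cases i <;> simpa

lemma vec_eq_vec_iff (a b c d e f : ℤ) :
    (![a, b, c] : Fin 3 → ℤ) = ![d, e, f] ↔ a = d ∧ b = e ∧ c = f := by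
  constructor
  · intro h
    refine ⟨?_, ?_, ?_⟩
    · simpa using congrFun h 0
    · simpa using congrFun h 1
    · simpa using congrFun h 2
  · rintro ⟨rfl, rfl, rfl⟩; rfl

def S14 (A B : ℤ) : Set (Fin 3 → ℤ) := {![1,0,0], ![A-1,1,0], ![A,1,0], ![B-A,A-1,1], ![B-A+1,A-1,1], ![B-1,A,1], ![B,A,1], ![-1,0,0], ![1-A,-1,0], ![-A,-1,0], ![A-B,1-A,-1], ![A-B-1,1-A,-1], ![1-B,-A,-1], ![-B,-A,-1]}

lemma S14_card : (S14 A B).ncard = 14 := by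
  rw [S14]
  rw [Set.ncard_insert_of_notMem (by simp only [Set.mem_insert_iff, Set.mem_singleton_iff, vec_eq_vec_iff]; omega) (Set.toFinite _)]
  rw [Set.ncard_insert_of_notMem (by simp only [Set.mem_insert_iff, Set.mem_singleton_iff, vec_eq_vec_iff]; omega) (Set.toFinite _)]
  rw [Set.ncard_insert_of_notMem (by simp only [Set.mem_insert_iff, Set.mem_singleton_iff, vec_eq_vec_iff]; omega) (Set.toFinite _)]
  rw [Set.ncard_insert_of_notMem (by simp only [Set.mem_insert_iff, Set.mem_singleton_iff, vec_eq_vec_iff]; omega) (Set.toFinite _)]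
  rw [Set.ncard_insert_of_notMem (by simp only [Set.mem_insert_iff, Set.mem_singleton_iff, vec_eq_vec_iff]; omega) (Set.toFinite _)]
  rw [Set.ncard_insert_of_notMem (by simp only [Set.mem_insert_iff, Set.mem_singleton_iff, vec_eq_vec_iff]; omega) (Set.toFinite _)]
  rw [Set.ncard_insert_of_notMem (by simp only [Set.mem_insert_iff, Set.mem_singleton_iff, vec_eq_vec_iff]; omega) (Set.toFinite _)]
  rw [Set.ncard_insert_of_notMem (by simp only [Set.mem_insert_iff, Set.mem_singleton_iff, vec_eq_vec_iff]; omega) (Set.toFinite _)]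
  rw [Set.ncard_insert_of_notMem (by simp only [Set.mem_insert_iff, Set.mem_singleton_iff, vec_eq_vec_iff]; omega) (Set.toFinite _)]
  rw [Set.ncard_insert_of_notMem (by simp only [Set.mem_insert_iff, Set.mem_singleton_iff, vec_eq_vec_iff]; omega) (Set.toFinite _)]
  rw [Set.ncard_insert_of_notMem (by simp only [Set.mem_insert_iff, Set.mem_singleton_iff, vec_eq_vec_iff]; omega) (Set.toFinite _)]
  rw [Set.ncard_insert_of_notMem (by simp only [Set.mem_insert_iff, Set.mem_singleton_iff, vec_eq_vec_iff]; omega) (Set.toFinite _)]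
  rw [Set.ncard_insert_of_notMem (by simp only [Set.mem_insert_iff, Set.mem_singleton_iff, vec_eq_vec_iff]; omega) (Set.toFinite _)]
  rw [Set.ncard_singleton]

lemma mem_S14_iff (v : Fin 3 → ℤ) :
    v ∈ S14 A B ↔
      (v 0 = 1 ∧ v 1 = 0 ∧ v 2 = 0) ∨ (v 0 = A-1 ∧ v 1 = 1 ∧ v 2 = 0) ∨
      (v 0 = A ∧ v 1 = 1 ∧ v 2 = 0) ∨ (v 0 = B-A ∧ v 1 = A-1 ∧ v 2 = 1) ∨
      (v 0 = B-A+1 ∧ v 1 = A-1 ∧ v 2 = 1) ∨ (v 0 = B-1 ∧ v 1 = A ∧ v 2 = 1) ∨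
      (v 0 = B ∧ v 1 = A ∧ v 2 = 1) ∨ (v 0 = -1 ∧ v 1 = 0 ∧ v 2 = 0) ∨
      (v 0 = 1-A ∧ v 1 = -1 ∧ v 2 = 0) ∨ (v 0 = -A ∧ v 1 = -1 ∧ v 2 = 0) ∨
      (v 0 = A-B ∧ v 1 = 1-A ∧ v 2 = -1) ∨ (v 0 = A-B-1 ∧ v 1 = 1-A ∧ v 2 = -1) ∨
      (v 0 = 1-B ∧ v 1 = -A ∧ v 2 = -1) ∨ (v 0 = -B ∧ v 1 = -A ∧ v 2 = -1) := by
  simp only [S14, Set.mem_insert_iff, Set.mem_singleton_iff, eq_vec_iff]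

lemma neg_vec (a b c : ℤ) : -(![a, b, c] : Fin 3 → ℤ) = ![-a, -b, -c] := by
  funext i; fin_cases i <;> simp

lemma S14_subset_neighbors (hT : IsABCTile A B C T) : S14 A B ⊆ Neighbors T := by
  intro v hv
  have hgoods : good T v := by
    rcases hv with h|h|h|h|h|h|h|h|h|h|h|h|h|h <;> subst h
    · exact good_q1 hT
    · exact good_q2 hT
    · exact good_q3 hT
    · exact good_q4 hT
    · exact good_q5 hT
    · exact good_q6 hT
    · exact good_q7 hT
    · have := good_neg (good_q1 hT); rwa [show -(q1) = (![-1,0,0] : Fin 3 → ℤ) by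
        funext i; fin_cases i <;> simp [q1]] at this
    · have := good_neg (good_q2 hT); rwa [show -(q2 A) = (![1-A,-1,0] : Fin 3 → ℤ) by
        funext i; fin_cases i <;> simp [q2] <;> ring] at this
    · have := good_neg (good_q3 hT); rwa [show -(q3 A) = (![-A,-1,0] : Fin 3 → ℤ) by
        funext i; fin_cases i <;> simp [q3]] at this
    · have := good_neg (good_q4 hT); rwa [show -(q4 A B) = (![A-B,1-A,-1] : Fin 3 → ℤ) by
        funext i; fin_cases i <;> simp [q4] <;> ring] at this
    · have := good_neg (good_q5 hT); rwa [show -(q5 A B) = (![A-B-1,1-A,-1] : Fin 3 → ℤ) by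
        funext i; fin_cases i <;> simp [q5] <;> ring] at this
    · have := good_neg (good_q6 hT); rwa [show -(q6 A B) = (![1-B,-A,-1] : Fin 3 → ℤ) by
        funext i; fin_cases i <;> simp [q6] <;> ring] at this
    · have := good_neg (good_q7 hT); rwa [show -(q7 A B) = (![-B,-A,-1] : Fin 3 → ℤ) by
        funext i; fin_cases i <;> simp [q7]] at this
  refine ⟨?_, hgoods⟩
  -- nonzero
  intro h0
  rw [mem_S14_iff] at hv
  have e0 : v 0 = 0 := by rw [h0]; rfl
  have e1 : v 1 = 0 := by rw [h0]; rfl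
  have e2 : v 2 = 0 := by rw [h0]; rfl
  have h1 := hT.1; have hAB := hT.2.1; have hBC := hT.2.2.1
  omega

lemma neighbors_finite (hT : IsABCTile A B C T) : (Neighbors T).Finite := by
  have hcpt : IsCompact T := hT.2.2.2.2.1
  obtain ⟨r, hr⟩ := hcpt.isBounded.subset_closedBall 0
  have hbnd : ∀ α ∈ Neighbors T, ∀ i, |α i| ≤ ⌈2 * r⌉ := by
    intro α hα i
    obtain ⟨x, hxT, y, hyT, hxy⟩ := hα.2
    have hx : dist x 0 ≤ r := hr hxT
    have hy : dist y 0 ≤ r := hr hyT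
    have hxi : |x i| ≤ r := by
      have := (dist_le_pi_dist x 0 i).trans hx
      simpa [Real.dist_eq] using this
    have hyi : |y i| ≤ r := by
      have := (dist_le_pi_dist y 0 i).trans hy
      simpa [Real.dist_eq] using this
    have hxyi : x i = y i + (α i : ℝ) := by
      have := congrFun hxy i
      simp only at this
      rw [← this]; rfl
    have habs : |(α i : ℝ)| ≤ 2 * r := by
      rw [show ((α i : ℝ)) = x i - y i by rw [hxyi]; ring]
      calc |x i - y i| ≤ |x i| + |y i| := abs_sub _ _
        _ ≤ 2 * r := by linarith
    have : -(2*r) ≤ ((α i : ℝ)) ∧ ((α i : ℝ)) ≤ 2 * r := abs_le.mp habs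
    rw [abs_le]
    constructor
    · have : -(2*r) ≤ ((α i : ℝ)) := this.1
      have h2 : ((-⌈2*r⌉ : ℤ) : ℝ) ≤ (α i : ℝ) := by
        push_cast
        calc ((-⌈2*r⌉ : ℝ)) ≤ -(2*r) := by
              have := Int.le_ceil (2*r); push_cast; linarith
          _ ≤ _ := this
      exact_mod_cast h2
    · have h2 : ((α i : ℝ)) ≤ (⌈2*r⌉ : ℝ) := (this.2).trans (Int.le_ceil _)
      exact_mod_cast h2
  apply Set.Finite.subset (Set.Finite.pi (fun i : Fin 3 => Set.finite_Icc (-⌈2*r⌉) ⌈2*r⌉))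
  intro α hα
  rw [Set.mem_pi]
  intro i _
  rw [Set.mem_Icc]
  have := hbnd α hα i
  rw [abs_le] at this
  exact this

lemma neighbors_eq_S14 (hT : IsABCTile A B C T) (h14 : (Neighbors T).ncard = 14) :
    Neighbors T = S14 A B := by
  refine (Set.eq_of_subset_of_ncard_le (S14_subset_neighbors hT) ?_ (neighbors_finite hT)).symm
  rw [h14, S14_card]

end S14sec


section Final
variable {A B C : ℤ} {T : Set (Fin 3 → ℝ)}

lemma toR_sub (u v : Fin 3 → ℤ) : toR (u - v) = toR u - toR v := by
  funext i; simp [toR]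

lemma good_of_two {uz vz : Fin 3 → ℤ} {x : Fin 3 → ℝ}
    (hu : x ∈ tileTranslate (toR uz) T) (hv : x ∈ tileTranslate (toR vz) T) :
    good T (uz - vz) := by
  obtain ⟨p, hp, hpx⟩ := hu
  obtain ⟨q, hq, hqx⟩ := hv
  refine ⟨q, hq, p, hp, ?_⟩
  show p + toR (uz - vz) = q
  rw [toR_sub]
  have h1 : p + toR uz = x := hpx
  have h2 : q + toR vz = x := hqx
  have : p + toR uz = q + toR vz := by rw [h1, h2]
  linear_combination (norm := abel) this

theorem stmt19 (A B C : ℤ) (T : Set (Fin 3 → ℝ)) (hT : IsABCTile A B C T)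
    (h14 : (Neighbors T).ncard = 14) (α : Fin 3 → ℤ) (hα : α ∈ Neighbors T)
    (i j : ℤ) (hj : 1 ≤ j) (hij : j ≤ i) (hi : i ≤ C - 1) :
    tileTranslate (toR ((i - j) • ![1, 0, 0])) (T ∩ tileTranslate (toR α) T) ∩
      tileTranslate (toR (i • ![1, 0, 0])) (T ∩ tileTranslate (toR α) T) = ∅ ∧
    tileTranslate (toR ((i - j) • ![1, 0, 0])) (T ∩ tileTranslate (toR α) T) ∩
      tileTranslate (toR (i • ![1, 0, 0])) (T ∩ tileTranslate (toR (α + ![1, 0, 0])) T) = ∅ := by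
  have h1 := hT.1; have hAB := hT.2.1; have hBC := hT.2.2.1
  have heq := neighbors_eq_S14 hT h14
  set Pz : Fin 3 → ℤ := ![1, 0, 0] with hPz
  -- generic membership extractor
  have hmem : ∀ γ : Fin 3 → ℤ, good T γ → γ = 0 ∨ γ ∈ S14 A B := by
    intro γ hg
    rcases eq_or_ne γ 0 with h | h
    · exact Or.inl h
    · exact Or.inr (heq ▸ (⟨h, hg⟩ : γ ∈ Neighbors T))
  have hαS : α ∈ S14 A B := heq ▸ hα
  rw [mem_S14_iff] at hαS
  constructor
  · rw [Set.eq_empty_iff_forall_notMem]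
    rintro x ⟨hxL, hxR⟩
    obtain ⟨y, ⟨hyT, hyα⟩, hyx⟩ := hxL
    obtain ⟨z, hzT, hzy⟩ := hyα
    obtain ⟨y', ⟨hy'T, hy'α⟩, hy'x⟩ := hxR
    obtain ⟨z', hz'T, hz'y'⟩ := hy'α
    -- memberships of x in four translated tiles
    have m1 : x ∈ tileTranslate (toR ((i - j) • Pz)) T := ⟨y, hyT, hyx⟩
    have m2 : x ∈ tileTranslate (toR ((i - j) • Pz + α)) T := by
      refine ⟨z, hzT, ?_⟩
      show z + toR ((i - j) • Pz + α) = x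
      rw [toR_add]
      have e1 : z + toR α = y := hzy
      have e2 : y + toR ((i - j) • Pz) = x := hyx
      rw [← e2, ← e1]; abel
    have m3 : x ∈ tileTranslate (toR (i • Pz)) T := ⟨y', hy'T, hy'x⟩
    have m4 : x ∈ tileTranslate (toR (i • Pz + α)) T := by
      refine ⟨z', hz'T, ?_⟩
      show z' + toR (i • Pz + α) = x
      rw [toR_add]
      have e1 : z' + toR α = y' := hz'y'
      have e2 : y' + toR (i • Pz) = x := hy'x
      rw [← e2, ← e1]; abel
    -- derived neighbor relations
    have gJ := good_of_two (T := T) m3 m1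
    have gP := good_of_two (T := T) m4 m1
    have gM := good_of_two (T := T) m3 m2
    have eJ : i • Pz - (i - j) • Pz = j • Pz := by module
    have eP : i • Pz + α - (i - j) • Pz = j • Pz + α := by module
    have eM : i • Pz - ((i - j) • Pz + α) = j • Pz - α := by module
    rw [eJ] at gJ; rw [eP] at gP; rw [eM] at gM
    have hJm := hmem _ gJ
    have hPm := hmem _ gP
    have hMm := hmem _ gM
    -- convert to components
    have cJ0 : (j • Pz) 0 = j := by simp [hPz]
    have cJ1 : (j • Pz) 1 = 0 := by simp [hPz]
    have cJ2 : (j • Pz) 2 = 0 := by simp [hPz]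
    have cP0 : (j • Pz + α) 0 = j + α 0 := by simp [hPz]
    have cP1 : (j • Pz + α) 1 = α 1 := by simp [hPz]
    have cP2 : (j • Pz + α) 2 = α 2 := by simp [hPz]
    have cM0 : (j • Pz - α) 0 = j - α 0 := by simp [hPz]
    have cM1 : (j • Pz - α) 1 = -α 1 := by simp [hPz]
    have cM2 : (j • Pz - α) 2 = -α 2 := by simp [hPz]
    have dis : ∀ (w : Fin 3 → ℤ), w = 0 ∨ w ∈ S14 A B →
        (w 0 = 0 ∧ w 1 = 0 ∧ w 2 = 0) ∨
        ((w 0 = 1 ∧ w 1 = 0 ∧ w 2 = 0) ∨ (w 0 = A-1 ∧ w 1 = 1 ∧ w 2 = 0) ∨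
        (w 0 = A ∧ w 1 = 1 ∧ w 2 = 0) ∨ (w 0 = B-A ∧ w 1 = A-1 ∧ w 2 = 1) ∨
        (w 0 = B-A+1 ∧ w 1 = A-1 ∧ w 2 = 1) ∨ (w 0 = B-1 ∧ w 1 = A ∧ w 2 = 1) ∨
        (w 0 = B ∧ w 1 = A ∧ w 2 = 1) ∨ (w 0 = -1 ∧ w 1 = 0 ∧ w 2 = 0) ∨
        (w 0 = 1-A ∧ w 1 = -1 ∧ w 2 = 0) ∨ (w 0 = -A ∧ w 1 = -1 ∧ w 2 = 0) ∨
        (w 0 = A-B ∧ w 1 = 1-A ∧ w 2 = -1) ∨ (w 0 = A-B-1 ∧ w 1 = 1-A ∧ w 2 = -1) ∨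
        (w 0 = 1-B ∧ w 1 = -A ∧ w 2 = -1) ∨ (w 0 = -B ∧ w 1 = -A ∧ w 2 = -1)) := by
      intro w hw
      rcases hw with h | h
      · left; rw [h]; exact ⟨rfl, rfl, rfl⟩
      · right; rwa [mem_S14_iff] at h
    have dJ := dis _ hJm
    have dP := dis _ hPm
    have dM := dis _ hMm
    rw [cJ0, cJ1, cJ2] at dJ
    rw [cP0, cP1, cP2] at dP
    rw [cM0, cM1, cM2] at dM
    omega
  · rw [Set.eq_empty_iff_forall_notMem]
    rintro x ⟨hxL, hxR⟩
    obtain ⟨y, ⟨hyT, hyα⟩, hyx⟩ := hxL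
    obtain ⟨z, hzT, hzy⟩ := hyα
    obtain ⟨y', ⟨hy'T, hy'α⟩, hy'x⟩ := hxR
    obtain ⟨z', hz'T, hz'y'⟩ := hy'α
    have m2 : x ∈ tileTranslate (toR ((i - j) • Pz + α)) T := by
      refine ⟨z, hzT, ?_⟩
      show z + toR ((i - j) • Pz + α) = x
      rw [toR_add]
      have e1 : z + toR α = y := hzy
      have e2 : y + toR ((i - j) • Pz) = x := hyx
      rw [← e2, ← e1]; abel
    have m4 : x ∈ tileTranslate (toR (i • Pz + (α + Pz))) T := by
      refine ⟨z', hz'T, ?_⟩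
      show z' + toR (i • Pz + (α + Pz)) = x
      rw [toR_add]
      have e1 : z' + toR (α + Pz) = y' := hz'y'
      have e2 : y' + toR (i • Pz) = x := hy'x
      rw [← e2, ← e1]; abel
    have gQ := good_of_two (T := T) m4 m2
    have eQ : i • Pz + (α + Pz) - ((i - j) • Pz + α) = (j + 1) • Pz := by
      module
    rw [eQ] at gQ
    have dQ := hmem _ gQ
    have c0 : ((j + 1) • Pz) 0 = j + 1 := by simp [hPz]
    have c1 : ((j + 1) • Pz) 1 = 0 := by simp [hPz]
    have c2 : ((j + 1) • Pz) 2 = 0 := by simp [hPz]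
    rcases dQ with h | h
    · have := congrFun h 0
      rw [c0] at this
      simp at this
      omega
    · rw [mem_S14_iff, c0, c1, c2] at h
      omega

end Final
end
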